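/- arXiv:1609.06601 — 13 statements merged into one kernel-verified Lean document; each statement's English description precedes it below -/
import Mathlib

section
/- Let (A,σ) be an F-algebra with involution and let 𝒫 ⊆ 𝒬 be two prepositive cones on (A,σ). Then 𝒫_F = 𝒬_F. -/
open Pointwise

/-- An ordering on a field `F`. -/
def IsOrdering {F : Type*} [Field F] (P : Set F) : Prop :=
  (∀ x ∈ P, ∀ y ∈ P, x + y ∈ P) ∧ (∀ x ∈ P, ∀ y ∈ P, x * y ∈ P) ∧
  (∀ x : F, x ∈ P ∨ -x ∈ P) ∧ (∀ x ∈ P, -x ∈ P → x = 0)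

/-- A prepositive cone on an `F`-algebra with involution `(A, star)`:
a subset of the symmetric elements which is nonempty, closed under addition,
closed under `p ↦ star x * p * x`, whose set of preserving scalars is an ordering
of `F`, and which is proper (`PC ∩ -PC = {0}`). -/
def IsPrepositiveCone (F : Type*) {A : Type*} [Field F] [Ring A] [Algebra F A] [StarRing A]
    (PC : Set A) : Prop :=
  (∀ a ∈ PC, star a = a) ∧ PC.Nonempty ∧ (∀ a ∈ PC, ∀ b ∈ PC, a + b ∈ PC) ∧
  (∀ x : A, ∀ p ∈ PC, star x * p * x ∈ PC) ∧
  IsOrdering {u : F | ∀ p ∈ PC, u • p ∈ PC} ∧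
  (∀ a ∈ PC, -a ∈ PC → a = 0)

/-- A prepositive cone over the ordering `P` of `F`. -/
def IsPrepositiveConeOver (F : Type*) {A : Type*} [Field F] [Ring A] [Algebra F A] [StarRing A]
    (P : Set F) (PC : Set A) : Prop :=
  IsPrepositiveCone F PC ∧ {u : F | ∀ p ∈ PC, u • p ∈ PC} = P

/-- If `PC ⊆ QC` are prepositive cones on `(A,σ)`, then `PC_F = QC_F`. -/
theorem stmt_5 {F A : Type*} [Field F] [Ring A] [Algebra F A] [StarRing A]
    [FiniteDimensional F A] (h2 : (2 : F) ≠ 0)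
    (hstar : ∀ c : F, star (algebraMap F A c) = algebraMap F A c)
    (PC QC : Set A) (hPC : IsPrepositiveCone F PC) (hQC : IsPrepositiveCone F QC)
    (hsub : PC ⊆ QC) :
    {u : F | ∀ p ∈ PC, u • p ∈ PC} = {u : F | ∀ q ∈ QC, u • q ∈ QC} := by

  obtain ⟨-, ⟨a₀, ha₀⟩, hPadd, hPmul, ⟨hPFadd, hPFmul, hPFtot, hPFprop⟩, hPprop⟩ := hPC
  obtain ⟨-, -, hQadd, hQmul, ⟨hQFadd, hQFmul, hQFtot, hQFprop⟩, hQprop⟩ := hQC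
  -- PC contains a nonzero element
  have hone : (1 : F) ∈ {u : F | ∀ p ∈ PC, u • p ∈ PC} := fun p hp => by simpa using hp
  have hnegone : (-1 : F) ∉ {u : F | ∀ p ∈ PC, u • p ∈ PC} := by
    intro h
    have := hPFprop 1 hone h
    exact one_ne_zero this
  have hpne : ∃ p ∈ PC, p ≠ 0 := by
    by_contra h
    push_neg at h
    exact hnegone (fun p hp => by simpa [h p hp] using hp)
  obtain ⟨p₀, hp₀, hp₀ne⟩ := hpne
  -- PC_F ⊆ QC_F
  have hsubF : {u : F | ∀ p ∈ PC, u • p ∈ PC} ⊆ {u : F | ∀ q ∈ QC, u • q ∈ QC} := by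
    intro u hu
    rcases hQFtot u with h | h
    · exact h
    · -- -u ∈ QC_F; then u • p₀ ∈ QC and -(u • p₀) ∈ QC
      have h1 : u • p₀ ∈ QC := hsub (hu p₀ hp₀)
      have h2 : -(u • p₀) ∈ QC := by
        have := h p₀ (hsub hp₀)
        simpa [neg_smul] using this
      have h3 : u • p₀ = 0 := hQprop _ h1 h2
      rcases smul_eq_zero.mp h3 with h4 | h4
      · subst h4; simpa using h
      · exact absurd h4 hp₀ne
  -- equality
  apply Set.Subset.antisymm hsubF
  intro u hu
  rcases hPFtot u with h | h
  · exact h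
  · have h1 : -u ∈ {u : F | ∀ q ∈ QC, u • q ∈ QC} := hsubF h
    have h2 : u = 0 := by
      by_contra hne
      exact hne (neg_eq_zero.mp (hQFprop (-u) h1 (by simpa using hu)))
    subst h2
    intro p hp
    simpa using hPmul 0 p hp
end

section
/- Let (A,σ) be an F-algebra with involution, 𝒫 a positive cone on (A,σ) over P ∈ X_F (i.e., a prepositive cone maximal with respect to inclusion with 𝒫_F = P), and a ∈ Sym(A,σ) \ 𝒫. Then there exist k ∈ ℕ, u_1,…,u_k ∈ P \ {0} and x_1,…,x_k ∈ A \ {0} such that Σ_{i=1}^k u_i σ(x_i) a x_i ∈ -𝒫. -/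
open Pointwise

/-- If `PC` is a positive cone on `(A,σ)` over `P` and `a` is a symmetric element not in
`PC`, then some finite sum `Σ uᵢ σ(xᵢ) a xᵢ` with `uᵢ ∈ P \ {0}` and `xᵢ ≠ 0` lies in `-PC`. -/
theorem stmt_6 {F A : Type*} [Field F] [Ring A] [Algebra F A] [StarRing A]
    [FiniteDimensional F A] (h2 : (2 : F) ≠ 0)
    (hstar : ∀ c : F, star (algebraMap F A c) = algebraMap F A c)
    (P : Set F) (PC : Set A) (hPC : IsPrepositiveConeOver F P PC)
    (hmax : ∀ QC : Set A, IsPrepositiveCone F QC → PC ⊆ QC → QC = PC)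
    (a : A) (hsym : star a = a) (ha : a ∉ PC) :
    ∃ (k : ℕ) (u : Fin k → F) (x : Fin k → A), 0 < k ∧
      (∀ i, u i ∈ P ∧ u i ≠ 0) ∧ (∀ i, x i ≠ 0) ∧
      -(∑ i, u i • (star (x i) * a * x i)) ∈ PC := by
  classical
  obtain ⟨⟨hPCsym, hPCne, hPCadd, hPCconj, hPord, hPCprop⟩, hPeq⟩ := hPC
  rw [hPeq] at hPord
  obtain ⟨hPadd, hPmul, hPtot, hPprop⟩ := hPord
  have h0PC : (0 : A) ∈ PC := by
    obtain ⟨p, hp⟩ := hPCne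
    simpa using hPCconj 0 p hp
  have ha0 : a ≠ 0 := fun h => ha (h ▸ h0PC)
  have hPsmul : ∀ u ∈ P, ∀ p ∈ PC, u • p ∈ PC := by
    intro u hu
    rw [← hPeq] at hu
    exact hu
  have hone : (1 : F) ∈ P := by
    rcases hPtot 1 with h | h
    · exact h
    · simpa using hPmul _ h _ h
  have hss : ∀ (u : F) (b : A), star (u • b) = u • star b := by
    intro u b
    rw [Algebra.smul_def, star_mul, hstar, ← Algebra.commutes, ← Algebra.smul_def]
  by_contra hgoal
  -- Key lemma: any admissible sum whose negative lies in PC has all terms zero.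
  have Klem : ∀ (k : ℕ) (u : Fin k → F) (x : Fin k → A), (∀ i, u i ∈ P) →
      -(∑ i, u i • (star (x i) * a * x i)) ∈ PC →
      ∀ i, u i • (star (x i) * a * x i) = 0 := by
    intro k u x hu hneg i
    by_contra hterm
    have hui : u i ≠ 0 := by rintro h; exact hterm (by simp [h])
    have hxi : x i ≠ 0 := by rintro h; exact hterm (by simp [h])
    set f : Fin k → A := fun j => u j • (star (x j) * a * x j) with hf
    set T : Finset (Fin k) := Finset.univ.filter (fun j => u j ≠ 0 ∧ x j ≠ 0) with hT
    have hiT : i ∈ T := by simp [hT, hui, hxi]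
    have hcard : 0 < T.card := Finset.card_pos.2 ⟨i, hiT⟩
    have hsumT : ∑ j ∈ T, f j = ∑ j, f j := by
      apply Finset.sum_filter_of_ne
      intro j _ hj
      constructor
      · rintro h; exact hj (by simp [hf, h])
      · rintro h; exact hj (by simp [hf, h])
    apply hgoal
    refine ⟨T.card, fun j => u ((T.equivFin.symm j : T) : Fin k),
      fun j => x ((T.equivFin.symm j : T) : Fin k), hcard, ?_, ?_, ?_⟩
    · intro j
      have h2' := (Finset.mem_filter.1 (T.equivFin.symm j).2).2
      exact ⟨hu _, h2'.1⟩
    · intro j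
      exact (Finset.mem_filter.1 (T.equivFin.symm j).2).2.2
    · have : ∑ j : Fin T.card, f ((T.equivFin.symm j : T) : Fin k) = ∑ j, f j := by
        rw [← hsumT, ← Finset.sum_coe_sort T f]
        exact Fintype.sum_equiv T.equivFin.symm
          (fun j => f ((T.equivFin.symm j : T) : Fin k))
          (fun t => f (t : Fin k)) (fun j => rfl)
      rw [show (∑ j : Fin T.card, u ((T.equivFin.symm j : T) : Fin k) •
          (star (x ((T.equivFin.symm j : T) : Fin k)) * a *
            x ((T.equivFin.symm j : T) : Fin k))) = ∑ j, f j from this]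
      exact hneg
  -- The candidate bigger cone
  set C : Set A := {c | ∃ p ∈ PC, ∃ k : ℕ, ∃ u : Fin k → F, ∃ x : Fin k → A,
    (∀ i, u i ∈ P) ∧ c = p + ∑ i, u i • (star (x i) * a * x i)} with hCdef
  have memC : ∀ p ∈ PC, ∀ (k : ℕ) (u : Fin k → F) (x : Fin k → A), (∀ i, u i ∈ P) →
      p + ∑ i, u i • (star (x i) * a * x i) ∈ C :=
    fun p hp k u x hu => ⟨p, hp, k, u, x, hu, rfl⟩
  have hPCsub : PC ⊆ C := by
    intro p hp
    have := memC p hp 0 (fun _ => 0) (fun _ => 0) (fun i => i.elim0)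
    simpa using this
  have haC : a ∈ C := by
    have := memC 0 h0PC 1 (fun _ => 1) (fun _ => 1) (fun _ => hone)
    simpa using this
  have haddC : ∀ c ∈ C, ∀ d ∈ C, c + d ∈ C := by
    rintro c ⟨p, hp, k, u, x, hu, rfl⟩ d ⟨q, hq, l, v, y, hv, rfl⟩
    have hmem : ∀ i, Fin.append u v i ∈ P := by
      intro i
      refine Fin.addCases (fun j => ?_) (fun j => ?_) i
      · rw [Fin.append_left]; exact hu j
      · rw [Fin.append_right]; exact hv j
    have hsum : ∑ i : Fin (k + l),
        Fin.append u v i • (star (Fin.append x y i) * a * Fin.append x y i)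
        = (∑ i, u i • (star (x i) * a * x i)) + ∑ i, v i • (star (y i) * a * y i) := by
      rw [Fin.sum_univ_add]
      simp [Fin.append_left, Fin.append_right]
    have := memC (p + q) (hPCadd p hp q hq) (k + l) (Fin.append u v) (Fin.append x y) hmem
    rw [hsum] at this
    rw [add_add_add_comm]
    exact this
  have hconjC : ∀ z : A, ∀ c ∈ C, star z * c * z ∈ C := by
    rintro z c ⟨p, hp, k, u, x, hu, rfl⟩
    have hsum : ∑ i, u i • (star (x i * z) * a * (x i * z))
        = star z * (∑ i, u i • (star (x i) * a * x i)) * z := by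
      rw [Finset.mul_sum, Finset.sum_mul]
      apply Finset.sum_congr rfl
      intro i _
      simp only [star_mul, mul_smul_comm, smul_mul_assoc, mul_assoc]
    have := memC (star z * p * z) (hPCconj z p hp) k u (fun i => x i * z) hu
    rw [hsum] at this
    rw [mul_add, add_mul]
    exact this
  have hsymC : ∀ c ∈ C, star c = c := by
    rintro c ⟨p, hp, k, u, x, hu, rfl⟩
    rw [star_add, hPCsym p hp, star_sum]
    congr 1
    apply Finset.sum_congr rfl
    intro i _
    rw [hss, star_mul, star_mul, star_star, hsym, mul_assoc]
  have hPsubSC : ∀ w ∈ P, ∀ c ∈ C, w • c ∈ C := by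
    rintro w hw c ⟨p, hp, k, u, x, hu, rfl⟩
    have := memC (w • p) (hPsmul w hw p hp) k (fun i => w * u i) x
      (fun i => hPmul w hw _ (hu i))
    simpa [smul_add, Finset.smul_sum, smul_smul] using this
  have hclaim : ∀ v ∈ P, (∀ c ∈ C, (-v) • c ∈ C) → v = 0 := by
    intro v hv hvC
    obtain ⟨q, hq, l, w, y, hw, heq⟩ := hvC a haC
    set u' : Fin (l + 1) → F := Fin.append w (fun _ => v) with hu'def
    set x' : Fin (l + 1) → A := Fin.append y (fun _ => (1 : A)) with hx'def
    have hu' : ∀ i, u' i ∈ P := by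
      intro i
      refine Fin.addCases (fun j => ?_) (fun j => ?_) i
      · rw [hu'def, Fin.append_left]; exact hw j
      · rw [hu'def, Fin.append_right]; exact hv
    have hsum' : ∑ i, u' i • (star (x' i) * a * x' i)
        = (∑ i, w i • (star (y i) * a * y i)) + v • a := by
      rw [hu'def, hx'def, Fin.sum_univ_add]
      simp [Fin.append_left, Fin.append_right]
    have hneg : -(∑ i, u' i • (star (x' i) * a * x' i)) ∈ PC := by
      rw [hsum']
      have hq' : -((∑ i, w i • (star (y i) * a * y i)) + v • a) = q := by
        rw [neg_smul] at heq
        rw [neg_add, heq]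
        abel
      rw [hq']
      exact hq
    have hlast := Klem (l + 1) u' x' hu' hneg (Fin.natAdd l 0)
    rw [hu'def, hx'def] at hlast
    simp only [Fin.append_right, star_one, one_mul, mul_one] at hlast
    by_contra hv0
    exact ha0 (by
      have := congrArg (fun z => v⁻¹ • z) hlast
      simpa [smul_smul, inv_mul_cancel₀ hv0] using this)
  have hSCprop : ∀ u : F, (∀ c ∈ C, u • c ∈ C) → (∀ c ∈ C, -u • c ∈ C) → u = 0 := by
    intro u h1 h2
    rcases hPtot u with h | h
    · exact hclaim u h h2
    · have : -u = 0 := hclaim (-u) h (by simpa using h1)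
      exact neg_eq_zero.mp this
  have hpropC : ∀ c ∈ C, -c ∈ C → c = 0 := by
    rintro c ⟨p, hp, k, u, x, hu, rfl⟩ hnc
    obtain ⟨q, hq, l, v, y, hv, heq⟩ := hnc
    set U : Fin (k + l) → F := Fin.append u v with hUdef
    set X : Fin (k + l) → A := Fin.append x y with hXdef
    have hU : ∀ i, U i ∈ P := by
      intro i
      refine Fin.addCases (fun j => ?_) (fun j => ?_) i
      · rw [hUdef, Fin.append_left]; exact hu j
      · rw [hUdef, Fin.append_right]; exact hv j
    have hsum : ∑ i, U i • (star (X i) * a * X i)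
        = (∑ i, u i • (star (x i) * a * x i)) + ∑ i, v i • (star (y i) * a * y i) := by
      rw [hUdef, hXdef, Fin.sum_univ_add]
      simp [Fin.append_left, Fin.append_right]
    have hneg : -(∑ i, U i • (star (X i) * a * X i)) ∈ PC := by
      rw [hsum]
      have : -((∑ i, u i • (star (x i) * a * x i)) + ∑ i, v i • (star (y i) * a * y i))
          = p + q := by
        have := heq
        rw [neg_add] at this
        -- this : -p + -(∑ u) = q + ∑ v
        have h3 : -(∑ i, u i • (star (x i) * a * x i))
            = p + q + ∑ i, v i • (star (y i) * a * y i) := by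
          rw [← sub_eq_iff_eq_add] at this ⊢
          rw [← this]; abel
        rw [neg_add, h3]; abel
      rw [this]
      exact hPCadd p hp q hq
    have hterms := Klem (k + l) U X hU hneg
    have hS1 : ∑ i, u i • (star (x i) * a * x i) = 0 := by
      apply Finset.sum_eq_zero
      intro i _
      have := hterms (Fin.castAdd l i)
      rwa [hUdef, hXdef, Fin.append_left, Fin.append_left] at this
    have hS2 : ∑ i, v i • (star (y i) * a * y i) = 0 := by
      apply Finset.sum_eq_zero
      intro i _
      have := hterms (Fin.natAdd k i)
      rwa [hUdef, hXdef, Fin.append_right, Fin.append_right] at this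
    rw [hS1, add_zero]
    rw [hS1, hS2, add_zero, add_zero] at heq
    exact hPCprop p hp (heq ▸ hq)
  have hCpc : IsPrepositiveCone F C := by
    refine ⟨hsymC, ⟨0, hPCsub h0PC⟩, haddC, fun z p hp => hconjC z p hp,
      ⟨?_, ?_, ?_, ?_⟩, hpropC⟩
    · intro w hw v hv c hc
      rw [add_smul]
      exact haddC _ (hw c hc) _ (hv c hc)
    · intro w hw v hv c hc
      rw [mul_smul]
      exact hw _ (hv c hc)
    · intro w
      rcases hPtot w with h | h
      · exact Or.inl (hPsubSC w h)
      · exact Or.inr (hPsubSC (-w) h)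
    · intro w hw hnw
      exact hSCprop w hw hnw
  have hCeq := hmax C hCpc hPCsub
  exact ha (hCeq ▸ haC)
end

section
/- Let D be an F-division algebra with involution ϑ, ℓ ≥ 1, and let 𝒫 be a prepositive cone on (D,ϑ) over an ordering P of F. For a hermitian matrix B ∈ Sym(M_ℓ(D), ϑ^t) the following are equivalent: (1) ϑ(X)^t B X ∈ 𝒫 for every column vector X ∈ D^ℓ; (2) there is G ∈ GL_ℓ(D) such that ϑ(G)^t B G is diagonal with all diagonal entries in 𝒫; (3) for every G ∈ GL_ℓ(D) such that ϑ(G)^t B G is diagonal, all diagonal entries lie in 𝒫. -/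
open Pointwise Matrix

namespace Stmt7Aux

variable {D : Type*} [DivisionRing D] [StarRing D]

/-- The "quadratic value" of a hermitian form given by a matrix. -/
def qf {n : ℕ} (B : Matrix (Fin n) (Fin n) D) (X : Fin n → D) : D :=
  star X ⬝ᵥ B *ᵥ X

lemma qf_eq {n : ℕ} (B : Matrix (Fin n) (Fin n) D) (X : Fin n → D) :
    qf B X = ∑ i, ∑ j, star (X i) * B i j * X j := by
  simp [qf, dotProduct, mulVec, Finset.mul_sum, mul_assoc]

lemma qf_congr {n : ℕ} (B G : Matrix (Fin n) (Fin n) D) (X : Fin n → D) :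
    qf (Gᴴ * B * G) X = qf B (G *ᵥ X) := by
  rw [qf, qf, Matrix.mul_assoc, ← Matrix.mulVec_mulVec, Matrix.dotProduct_mulVec,
    ← Matrix.star_mulVec, ← Matrix.mulVec_mulVec]

lemma star_single {n : ℕ} (i : Fin n) (a : D) :
    star (Pi.single i a) = (Pi.single i (star a) : Fin n → D) := by
  ext k
  by_cases h : k = i <;> simp [Pi.single_apply, h]

lemma qf_cross {n : ℕ} (B : Matrix (Fin n) (Fin n) D) (k l : Fin n) (a b : D) :
    star (Pi.single k a) ⬝ᵥ B *ᵥ (Pi.single l b) = star a * B k l * b := by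
  rw [star_single, Matrix.mulVec_single, single_dotProduct, mul_assoc]
  rfl

lemma qf_single {n : ℕ} (B : Matrix (Fin n) (Fin n) D) (i : Fin n) (a : D) :
    qf B (Pi.single i a) = star a * B i i * a :=
  qf_cross B i i a a

lemma qf_add {n : ℕ} (B : Matrix (Fin n) (Fin n) D) (u v : Fin n → D) :
    qf B (u + v) = qf B u + qf B v + (star u ⬝ᵥ B *ᵥ v) + (star v ⬝ᵥ B *ᵥ u) := by
  simp only [qf, star_add, Matrix.mulVec_add, add_dotProduct, dotProduct_add]
  abel

lemma diag_entry {n : ℕ} (B G : Matrix (Fin n) (Fin n) D) (i : Fin n) :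
    (Gᴴ * B * G) i i = qf B (G *ᵥ Pi.single i 1) := by
  rw [← qf_congr, qf_single]
  simp

lemma herm_congr {n : ℕ} {B : Matrix (Fin n) (Fin n) D} (hB : Bᴴ = B)
    (G : Matrix (Fin n) (Fin n) D) : (Gᴴ * B * G)ᴴ = Gᴴ * B * G := by
  simp [Matrix.conjTranspose_mul, Matrix.mul_assoc, hB]

lemma congr_mul {n : ℕ} (B G₁ G₂ : Matrix (Fin n) (Fin n) D) :
    ((G₁ * G₂)ᴴ * B * (G₁ * G₂)) = G₂ᴴ * (G₁ᴴ * B * G₁) * G₂ := by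
  simp [Matrix.conjTranspose_mul, Matrix.mul_assoc]


-- permutation matrix for swapping: brings a nonzero diagonal entry to position (0,0)
lemma swap_pivot {m : ℕ} (B : Matrix (Fin (m+1)) (Fin (m+1)) D) (i : Fin (m+1))
    (hi : B i i ≠ 0) :
    ∃ G : Matrix (Fin (m+1)) (Fin (m+1)) D, IsUnit G ∧ (Gᴴ * B * G) 0 0 ≠ 0 := by
  classical
  set σ := Equiv.swap (0 : Fin (m+1)) i with hσ
  set Pm : Matrix (Fin (m+1)) (Fin (m+1)) D :=
    Matrix.of fun k j => if k = σ j then 1 else 0 with hPm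
  set Pm' : Matrix (Fin (m+1)) (Fin (m+1)) D :=
    Matrix.of fun k j => if σ k = j then 1 else 0 with hPm'
  have h1 : Pm * Pm' = 1 := by
    ext a b
    rw [Matrix.mul_apply]
    rw [Finset.sum_eq_single (σ.symm a)]
    · by_cases hab : a = b <;>
        simp [Pm, Pm', Matrix.one_apply, hab]
    · intro k _ hk
      have : a ≠ σ k := fun h => hk (by simp [h])
      simp [Pm, this]
    · simp
  have h2 : Pm' * Pm = 1 := by
    ext a b
    rw [Matrix.mul_apply]
    rw [Finset.sum_eq_single (σ a)]
    · by_cases hab : a = b <;> simp [Pm, Pm', Matrix.one_apply, hab, σ.injective.eq_iff]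
    · intro k _ hk
      simp [Pm', Ne.symm hk]
    · simp
  refine ⟨Pm, ⟨⟨Pm, Pm', h1, h2⟩, rfl⟩, ?_⟩
  have hcol : Pm *ᵥ Pi.single 0 1 = Pi.single i (1 : D) := by
    funext k
    have : (Pm *ᵥ Pi.single 0 1) k = Pm k 0 := by simp
    rw [this]
    have hσ0 : σ 0 = i := Equiv.swap_apply_left 0 i
    by_cases hk : k = i <;> simp [Pm, hσ0, hk, Pi.single_apply]
  rw [diag_entry, hcol, qf_single]
  simpa using hi
-- transvection: creates a nonzero diagonal entry when the diagonal is zero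
lemma trans_pivot {m : ℕ} (h2D : (2 : D) ≠ 0) (B : Matrix (Fin (m+1)) (Fin (m+1)) D)
    (hB : Bᴴ = B) (hd : ∀ k, B k k = 0) {i j : Fin (m+1)} (hij : i ≠ j) (hb : B i j ≠ 0) :
    ∃ G : Matrix (Fin (m+1)) (Fin (m+1)) D, IsUnit G ∧ (Gᴴ * B * G) i i ≠ 0 := by
  classical
  set c := (B i j)⁻¹ with hc
  set E := Matrix.single j i c with hE
  have hEE : E * E = 0 := by simp [hE, hij]
  have hGu : IsUnit (1 + E) := by
    refine ⟨⟨1 + E, 1 - E, ?_, ?_⟩, rfl⟩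
    · have : (1 + E) * (1 - E) = 1 - E * E := by noncomm_ring
      rw [this, hEE, sub_zero]
    · have : (1 - E) * (1 + E) = 1 - E * E := by noncomm_ring
      rw [this, hEE, sub_zero]
  refine ⟨1 + E, hGu, ?_⟩
  have hcol : (1 + E) *ᵥ Pi.single i 1 = Pi.single i 1 + Pi.single j c := by
    funext k
    have hE' : E k i = (Pi.single j c : Fin (m+1) → D) k := by
      rcases eq_or_ne k j with rfl | hk
      · simp [hE, Matrix.single]
      · simp [hE, Matrix.single, Pi.single_apply, hk, Ne.symm hk]
    simp [Matrix.add_mulVec, hE', Matrix.one_apply, Pi.single_apply]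
  rw [diag_entry, hcol, qf_add, qf_single, qf_single, qf_cross, qf_cross]
  have hji : B j i = star (B i j) := by
    conv_lhs => rw [← hB]
    simp
  have hbc : B i j * c = 1 := mul_inv_cancel₀ hb
  rw [hd i, hd j, hji]
  have : star c * star (B i j) = 1 := by
    rw [← StarMul.star_mul, hbc, star_one]
  simp only [mul_zero, zero_mul, star_one, one_mul, mul_one, zero_add, add_zero, hbc, this]
  rw [one_add_one_eq_two]
  exact h2D

-- pivot: a nonzero hermitian matrix is congruent to one with nonzero (0,0) entry
lemma pivot {m : ℕ} (h2D : (2 : D) ≠ 0) (B : Matrix (Fin (m+1)) (Fin (m+1)) D)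
    (hB : Bᴴ = B) (h0 : B ≠ 0) :
    ∃ G : Matrix (Fin (m+1)) (Fin (m+1)) D, IsUnit G ∧ (Gᴴ * B * G) 0 0 ≠ 0 := by
  classical
  by_cases hd : ∃ k, B k k ≠ 0
  · obtain ⟨k, hk⟩ := hd
    exact swap_pivot B k hk
  · push_neg at hd
    have hex : ∃ i j, B i j ≠ 0 := by
      by_contra h
      push_neg at h
      exact h0 (by ext i j; simpa using h i j)
    obtain ⟨i, j, hb⟩ := hex
    have hij : i ≠ j := by
      rintro rfl
      exact hb (hd i)
    obtain ⟨G₁, hG₁, hp⟩ := trans_pivot h2D B hB hd hij hb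
    obtain ⟨G₂, hG₂, hp₂⟩ := swap_pivot (G₁ᴴ * B * G₁) i hp
    exact ⟨G₁ * G₂, hG₁.mul hG₂, by rw [congr_mul]; exact hp₂⟩
-- clearing: if B 0 0 ≠ 0, we can kill the rest of row 0
lemma clearing {m : ℕ} (B : Matrix (Fin (m+1)) (Fin (m+1)) D) (hd : B 0 0 ≠ 0) :
    ∃ G : Matrix (Fin (m+1)) (Fin (m+1)) D, IsUnit G ∧
      ∀ j, j ≠ 0 → (Gᴴ * B * G) 0 j = 0 := by
  classical
  set E : Matrix (Fin (m+1)) (Fin (m+1)) D :=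
    Matrix.of fun i j => if i = 0 ∧ j ≠ 0 then -((B 0 0)⁻¹ * B 0 j) else 0 with hE
  have hEE : E * E = 0 := by
    ext i j
    rw [Matrix.mul_apply, Matrix.zero_apply]
    refine Finset.sum_eq_zero fun k _ => ?_
    rcases eq_or_ne k 0 with rfl | hk
    · simp [hE]
    · simp [hE, hk]
  have hGu : IsUnit (1 + E) := by
    refine ⟨⟨1 + E, 1 - E, ?_, ?_⟩, rfl⟩
    · have : (1 + E) * (1 - E) = 1 - E * E := by noncomm_ring
      rw [this, hEE, sub_zero]
    · have : (1 - E) * (1 + E) = 1 - E * E := by noncomm_ring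
      rw [this, hEE, sub_zero]
  refine ⟨1 + E, hGu, ?_⟩
  intro j hj
  have hexp : (1 + E)ᴴ * B * (1 + E) = B * (1 + E) + Eᴴ * (B * (1 + E)) := by
    rw [Matrix.conjTranspose_add, Matrix.conjTranspose_one]
    noncomm_ring
  have h1 : (Eᴴ * (B * (1 + E))) 0 j = 0 := by
    rw [Matrix.mul_apply]
    refine Finset.sum_eq_zero fun k _ => ?_
    have : Eᴴ 0 k = 0 := by simp [hE, Matrix.conjTranspose_apply]
    rw [this, zero_mul]
  have h2 : (B * (1 + E)) 0 j = 0 := by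
    rw [Matrix.mul_add, Matrix.mul_one, Matrix.add_apply, Matrix.mul_apply,
      Finset.sum_eq_single_of_mem 0 (Finset.mem_univ _) fun k _ hk => by simp [hE, hk]]
    have hE0j : E 0 j = -((B 0 0)⁻¹ * B 0 j) := by simp [hE, hj]
    rw [hE0j, mul_neg, ← mul_assoc, mul_inv_cancel₀ hd, one_mul, add_neg_cancel]
  rw [hexp, Matrix.add_apply, h1, h2, add_zero]

omit [StarRing D] in
lemma isDiag_submatrix {α β : Type*} (M : Matrix α α D) (f : β → α)
    (hf : Function.Injective f) (hM : M.IsDiag) : (M.submatrix f f).IsDiag :=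
  fun _ _ hij => hM fun h => hij (hf h)

lemma exists_diag (h2D : (2 : D) ≠ 0) :
    ∀ (n : ℕ) (B : Matrix (Fin n) (Fin n) D), Bᴴ = B →
      ∃ G : Matrix (Fin n) (Fin n) D, IsUnit G ∧ (Gᴴ * B * G).IsDiag := by
  intro n
  induction n with
  | zero => exact fun B _ => ⟨1, isUnit_one, by intro i j _; exact i.elim0⟩
  | succ m ih =>
    intro B hB
    by_cases h0 : B = 0
    · exact ⟨1, isUnit_one, by simp [h0]⟩
    obtain ⟨G₀, hG₀, hpiv⟩ := pivot h2D B hB h0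
    obtain ⟨G₁, hG₁, hrow⟩ := clearing (G₀ᴴ * B * G₀) hpiv
    set B' := G₁ᴴ * (G₀ᴴ * B * G₀) * G₁ with hB'def
    have hB' : B'ᴴ = B' := herm_congr (herm_congr hB G₀) G₁
    have hcol : ∀ j, j ≠ 0 → B' j 0 = 0 := by
      intro j hj
      have hsym := congrFun (congrFun hB' j) 0
      rw [Matrix.conjTranspose_apply] at hsym
      rw [← hsym, hrow j hj, star_zero]
    set B₂ := B'.submatrix Fin.succ Fin.succ with hB₂def
    have hB₂ : B₂ᴴ = B₂ := by
      ext i j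
      rw [Matrix.conjTranspose_apply, hB₂def, Matrix.submatrix_apply, Matrix.submatrix_apply,
        ← Matrix.conjTranspose_apply, hB']
    obtain ⟨G₂, hG₂, hd₂⟩ := ih B₂ hB₂
    obtain ⟨u₂, hu₂⟩ := hG₂
    set e : Fin 1 ⊕ Fin m ≃ Fin (m+1) := finSumFinEquiv.trans (finCongr (Nat.add_comm 1 m))
      with he
    have he0 : ∀ x : Fin 1, e (Sum.inl x) = 0 := by
      intro x
      rw [Subsingleton.elim x 0]
      apply Fin.ext
      simp [he]
    have hes : ∀ x : Fin m, e (Sum.inr x) = x.succ := by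
      intro x
      apply Fin.ext
      simp [he, Fin.val_succ, Nat.add_comm]
    have hmul : ∀ X Y : Matrix (Fin 1 ⊕ Fin m) (Fin 1 ⊕ Fin m) D,
        X.submatrix e.symm e.symm * Y.submatrix e.symm e.symm = (X * Y).submatrix e.symm e.symm :=
      fun X Y => Matrix.submatrix_mul_equiv X Y _ _ _
    have hblock : B' = (Matrix.fromBlocks (Matrix.of fun _ _ => B' 0 0) 0 0 B₂).submatrix
        e.symm e.symm := by
      ext i j
      obtain ⟨x, rfl⟩ := e.surjective i
      obtain ⟨y, rfl⟩ := e.surjective j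
      rw [Matrix.submatrix_apply, Equiv.symm_apply_apply, Equiv.symm_apply_apply]
      rcases x with x | x <;> rcases y with y | y
      · rw [he0 x, he0 y, Matrix.fromBlocks_apply₁₁, Matrix.of_apply]
      · rw [he0 x, hes y, Matrix.fromBlocks_apply₁₂, Matrix.zero_apply]
        exact hrow _ (Fin.succ_ne_zero y)
      · rw [hes x, he0 y, Matrix.fromBlocks_apply₂₁, Matrix.zero_apply]
        exact hcol _ (Fin.succ_ne_zero x)
      · rw [hes x, hes y, Matrix.fromBlocks_apply₂₂]
        rfl
    set G₃ : Matrix (Fin (m+1)) (Fin (m+1)) D :=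
      (Matrix.fromBlocks 1 0 0 G₂).submatrix e.symm e.symm with hG₃
    have hG₃u : IsUnit G₃ := by
      refine ⟨⟨G₃, (Matrix.fromBlocks 1 0 0 (u₂⁻¹.val : Matrix (Fin m) (Fin m) D)).submatrix
        e.symm e.symm, ?_, ?_⟩, rfl⟩
      · have h21 : G₂ * (u₂⁻¹.val : Matrix (Fin m) (Fin m) D) = 1 := by
          rw [← hu₂]; exact u₂.mul_inv
        rw [hG₃, hmul, Matrix.fromBlocks_multiply]
        simp only [Matrix.one_mul, Matrix.mul_one, Matrix.mul_zero, Matrix.zero_mul,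
          add_zero, zero_add, h21, Matrix.fromBlocks_one, Matrix.submatrix_one_equiv]
      · have h12 : (u₂⁻¹.val : Matrix (Fin m) (Fin m) D) * G₂ = 1 := by
          rw [← hu₂]; exact u₂.inv_mul
        rw [hG₃, hmul, Matrix.fromBlocks_multiply]
        simp only [Matrix.one_mul, Matrix.mul_one, Matrix.mul_zero, Matrix.zero_mul,
          add_zero, zero_add, h12, Matrix.fromBlocks_one, Matrix.submatrix_one_equiv]
    refine ⟨G₀ * G₁ * G₃, (hG₀.mul hG₁).mul hG₃u, ?_⟩
    have hcongr : (G₀ * G₁ * G₃)ᴴ * B * (G₀ * G₁ * G₃) = G₃ᴴ * B' * G₃ := by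
      rw [hB'def]
      simp [Matrix.conjTranspose_mul, Matrix.mul_assoc]
    have hprod : (Matrix.fromBlocks (1 : Matrix (Fin 1) (Fin 1) D) 0 0 G₂)ᴴ *
        (Matrix.fromBlocks (Matrix.of fun _ _ => B' 0 0) 0 0 B₂) *
        (Matrix.fromBlocks 1 0 0 G₂) =
        Matrix.fromBlocks (Matrix.of fun _ _ => B' 0 0) 0 0 (G₂ᴴ * B₂ * G₂) := by
      rw [Matrix.fromBlocks_conjTranspose, Matrix.fromBlocks_multiply, Matrix.fromBlocks_multiply]
      simp only [Matrix.conjTranspose_one, Matrix.conjTranspose_zero, Matrix.one_mul,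
        Matrix.mul_one, Matrix.mul_zero, Matrix.zero_mul, add_zero, zero_add]
    rw [hcongr, hG₃, Matrix.conjTranspose_submatrix, hblock, hmul, hmul, hprod]
    refine isDiag_submatrix _ _ e.symm.injective ?_
    exact Matrix.IsDiag.fromBlocks (fun i j hij => absurd (Subsingleton.elim i j) hij) hd₂

end Stmt7Aux

/-- Characterization of `PSD` matrices with respect to a prepositive cone on a division
algebra with involution: for a hermitian matrix `B` over `(M_ℓ(D), ϑ^t)`, the conditions
(1) `ϑ(X)^t B X ∈ PC` for all column vectors `X`, (2) some congruence diagonalization of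
`B` has all diagonal entries in `PC`, (3) every congruence diagonalization of `B` has all
diagonal entries in `PC`, are equivalent. -/

theorem stmt_7 {F D : Type*} [Field F] [DivisionRing D] [Algebra F D] [StarRing D]
    [FiniteDimensional F D] (h2 : (2 : F) ≠ 0)
    (hstar : ∀ c : F, star (algebraMap F D c) = algebraMap F D c)
    (n : ℕ) (hn : 0 < n)
    (P : Set F) (PC : Set D) (hPC : IsPrepositiveConeOver F P PC)
    (B : Matrix (Fin n) (Fin n) D) (hB : Bᴴ = B) :
    List.TFAE
      [ ∀ X : Fin n → D, (∑ i, ∑ j, star (X i) * B i j * X j) ∈ PC,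
        ∃ G : Matrix (Fin n) (Fin n) D, IsUnit G ∧ (Gᴴ * B * G).IsDiag ∧
          ∀ i, (Gᴴ * B * G) i i ∈ PC,
        ∀ G : Matrix (Fin n) (Fin n) D, IsUnit G → (Gᴴ * B * G).IsDiag →
          ∀ i, (Gᴴ * B * G) i i ∈ PC ] := by
  obtain ⟨⟨hsym, hne, hadd, hmul, hord, hprop⟩, hP⟩ := hPC
  have h2D : (2 : D) ≠ 0 := fun h =>
    h2 ((algebraMap F D).injective (by rw [map_ofNat, map_zero]; exact h))
  have h0PC : (0 : D) ∈ PC := by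
    obtain ⟨p, hp⟩ := hne
    simpa using hmul 0 p hp
  tfae_have 1 → 3 := by
    intro h1 G hGu hdiag i
    rw [Stmt7Aux.diag_entry, Stmt7Aux.qf_eq]
    exact h1 _
  tfae_have 3 → 2 := by
    intro h3
    obtain ⟨G, hGu, hdiag⟩ := Stmt7Aux.exists_diag h2D n B hB
    exact ⟨G, hGu, hdiag, h3 G hGu hdiag⟩
  tfae_have 2 → 1 := by
    rintro ⟨G, hGu, hdiag, hPCd⟩ X
    obtain ⟨u, hu⟩ := hGu
    set Y := (u⁻¹.val : Matrix (Fin n) (Fin n) D) *ᵥ X with hY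
    have hX : X = G *ᵥ Y := by
      rw [hY, Matrix.mulVec_mulVec, ← hu, u.mul_inv, Matrix.one_mulVec]
    rw [← Stmt7Aux.qf_eq, hX, ← Stmt7Aux.qf_congr, Stmt7Aux.qf_eq]
    refine Finset.sum_induction _ (· ∈ PC) (fun a b ha hb => hadd a ha b hb) h0PC ?_
    intro i _
    rw [Finset.sum_eq_single_of_mem i (Finset.mem_univ i)
      (fun l _ hl => by rw [hdiag (Ne.symm hl), mul_zero, zero_mul])]
    exact hmul (Y i) _ (hPCd i)
  tfae_finish
end

section
/- Let D be an F-division algebra with involution ϑ and 𝒫 a prepositive cone on (D,ϑ) over an ordering P of F. Then PSD_ℓ(𝒫) := {B ∈ Sym(M_ℓ(D),ϑ^t) | ϑ(X)^t B X ∈ 𝒫 for all X ∈ D^ℓ} is a prepositive cone on (M_ℓ(D), ϑ^t) over P. -/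
open Pointwise Matrix

section Aux

variable {D : Type*} [DivisionRing D] [StarRing D] {n : ℕ}

/-- Quadratic form of a matrix at a pair of "basis" vectors. -/
lemma quad_pair_aux (B : Matrix (Fin n) (Fin n) D) (i j : Fin n) (a d : D) :
    (∑ i', ∑ j', star ((Pi.single i a : Fin n → D) i') * B i' j' *
      (Pi.single j d : Fin n → D) j') = star a * B i j * d := by
  simp [Pi.single_apply, apply_ite (star : D → D), star_zero, ite_mul, zero_mul, mul_ite, mul_zero,
    Finset.sum_ite_eq', Finset.mem_univ, if_true]

lemma quad_dot_aux (B : Matrix (Fin n) (Fin n) D) (X : Fin n → D) :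
    (∑ i, ∑ j, star (X i) * B i j * X j) = star X ⬝ᵥ B.mulVec X := by
  simp [dotProduct, Matrix.mulVec, Finset.mul_sum, mul_assoc]

lemma quad_congr_aux (B : Matrix (Fin n) (Fin n) D) (M : Matrix (Fin n) (Fin n) D)
    (X : Fin n → D) :
    star X ⬝ᵥ (Mᴴ * B * M).mulVec X = star (M.mulVec X) ⬝ᵥ B.mulVec (M.mulVec X) := by
  rw [← Matrix.mulVec_mulVec, ← Matrix.mulVec_mulVec, Matrix.dotProduct_mulVec,
    ← Matrix.star_mulVec]

lemma quad_add_aux (B : Matrix (Fin n) (Fin n) D) (X Y : Fin n → D) :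
    (∑ i, ∑ j, star ((X + Y) i) * B i j * (X + Y) j) =
      (∑ i, ∑ j, star (X i) * B i j * X j) + (∑ i, ∑ j, star (X i) * B i j * Y j) +
      ((∑ i, ∑ j, star (Y i) * B i j * X j) + (∑ i, ∑ j, star (Y i) * B i j * Y j)) := by
  simp only [Pi.add_apply, star_add, add_mul, mul_add, Finset.sum_add_distrib]
  abel

end Aux

/-- If `PC` is a prepositive cone on a division algebra with involution `(D,ϑ)` over `P`,
then the set `PSD_ℓ(PC)` of hermitian matrices `B` with `ϑ(X)^t B X ∈ PC` for all
`X ∈ D^ℓ` is a prepositive cone on `(M_ℓ(D), ϑ^t)` over `P`. -/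
theorem stmt_8 {F D : Type*} [Field F] [DivisionRing D] [Algebra F D] [StarRing D]
    [FiniteDimensional F D] (h2 : (2 : F) ≠ 0)
    (hstar : ∀ c : F, star (algebraMap F D c) = algebraMap F D c)
    (n : ℕ) (hn : 0 < n)
    (P : Set F) (PC : Set D) (hPC : IsPrepositiveConeOver F P PC) :
    IsPrepositiveConeOver F P
      {B : Matrix (Fin n) (Fin n) D | Bᴴ = B ∧
        ∀ X : Fin n → D, (∑ i, ∑ j, star (X i) * B i j * X j) ∈ PC} := by
  obtain ⟨⟨hsym, ⟨p₀, hp₀⟩, hadd, hcong, hord, hproper⟩, hPeq⟩ := hPC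
  -- 0 ∈ PC
  have h0 : (0 : D) ∈ PC := by simpa using hcong 0 p₀ hp₀
  -- sums of elements of PC are in PC
  have hsumPC : ∀ (f : Fin n → D), (∀ i, f i ∈ PC) → (∑ i, f i) ∈ PC := fun f hf =>
    Finset.sum_induction f (· ∈ PC) (fun a b ha hb => hadd a ha b hb) h0 (fun i _ => hf i)
  -- star commutes with scalar action
  have hstarsmul : ∀ (u : F) (x : D), star (u • x) = u • star x := by
    intro u x
    rw [Algebra.smul_def, StarMul.star_mul, hstar, ← Algebra.commutes, ← Algebra.smul_def]
  -- 2 ≠ 0 in D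
  have h2D : (2 : D) ≠ 0 := by
    intro h
    apply h2
    have : algebraMap F D 2 = 0 := by rw [map_ofNat]; exact_mod_cast h
    exact (map_eq_zero_iff (algebraMap F D) (algebraMap F D).injective).1 this
  -- abbreviation for the quadratic form
  set S : Set (Matrix (Fin n) (Fin n) D) :=
    {B : Matrix (Fin n) (Fin n) D | Bᴴ = B ∧
      ∀ X : Fin n → D, (∑ i, ∑ j, star (X i) * B i j * X j) ∈ PC} with hSdef
  -- key: the two scalar sets coincide
  have hscal : {u : F | ∀ p ∈ S, u • p ∈ S} = {u : F | ∀ p ∈ PC, u • p ∈ PC} := by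
    ext u
    simp only [Set.mem_setOf_eq]
    constructor
    · intro hu p hp
      -- scalar matrix p • 1, realized as diagonal
      have hBmem : (Matrix.diagonal (fun _ => p) : Matrix (Fin n) (Fin n) D) ∈ S := by
        constructor
        · rw [Matrix.diagonal_conjTranspose]
          have hsp : (star fun _ : Fin n => p) = fun _ : Fin n => p :=
            funext fun _ => hsym p hp
          rw [hsp]
        · intro X
          have : (∑ i, ∑ j, star (X i) * (Matrix.diagonal (fun _ => p) : Matrix (Fin n) (Fin n) D) i j * X j)
              = ∑ i, star (X i) * p * X i := by
            refine Finset.sum_congr rfl fun i _ => ?_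
            simp [Matrix.diagonal_apply, mul_ite, ite_mul, mul_zero, zero_mul,
              Finset.sum_ite_eq, Finset.mem_univ, if_true]
          rw [this]
          exact hsumPC _ fun i => hcong (X i) p hp
      have := (hu _ hBmem).2 (Pi.single ⟨0, hn⟩ 1)
      rw [quad_pair_aux] at this
      simpa [Matrix.diagonal_apply, Algebra.mul_smul_comm, Algebra.smul_mul_assoc] using this
    · intro hu B hB
      obtain ⟨hB1, hB2⟩ := hB
      constructor
      · ext i j
        simp only [Matrix.conjTranspose_apply, Matrix.smul_apply]
        rw [hstarsmul]
        congr 1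
        exact congrFun (congrFun hB1 i) j
      · intro X
        have : (∑ i, ∑ j, star (X i) * (u • B) i j * X j)
            = u • ∑ i, ∑ j, star (X i) * B i j * X j := by
          simp [Matrix.smul_apply, mul_smul_comm, smul_mul_assoc, Finset.smul_sum]
        rw [this]
        exact hu _ (hB2 X)
  refine ⟨⟨?_, ?_, ?_, ?_, ?_, ?_⟩, ?_⟩
  · -- symmetric
    intro B hB
    exact hB.1
  · -- nonempty
    refine ⟨0, ?_, ?_⟩
    · simp
    · intro X
      simpa using h0
  · -- closed under addition
    rintro A ⟨hA1, hA2⟩ B ⟨hB1, hB2⟩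
    refine ⟨by rw [Matrix.conjTranspose_add, hA1, hB1], fun X => ?_⟩
    have : (∑ i, ∑ j, star (X i) * (A + B) i j * X j)
        = (∑ i, ∑ j, star (X i) * A i j * X j) + (∑ i, ∑ j, star (X i) * B i j * X j) := by
      simp [Matrix.add_apply, mul_add, add_mul, Finset.sum_add_distrib]
    rw [this]
    exact hadd _ (hA2 X) _ (hB2 X)
  · -- closed under congruence
    rintro M B ⟨hB1, hB2⟩
    have hstarM : star M = Mᴴ := rfl
    refine ⟨?_, fun X => ?_⟩
    · rw [hstarM]
      rw [Matrix.conjTranspose_mul, Matrix.conjTranspose_mul, Matrix.conjTranspose_conjTranspose,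
        hB1, Matrix.mul_assoc]
    · rw [hstarM, quad_dot_aux, quad_congr_aux, ← quad_dot_aux]
      exact hB2 (M.mulVec X)
  · -- ordering
    rw [hscal]
    exact hord
  · -- properness
    rintro B ⟨hB1, hB2⟩ hnB
    obtain ⟨hnB1, hnB2⟩ := hnB
    -- the quadratic form vanishes identically
    have hq0 : ∀ X : Fin n → D, (∑ i, ∑ j, star (X i) * B i j * X j) = 0 := by
      intro X
      have h1 := hB2 X
      have h2' := hnB2 X
      have : (∑ i, ∑ j, star (X i) * (-B) i j * X j)
          = -(∑ i, ∑ j, star (X i) * B i j * X j) := by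
        simp [Matrix.neg_apply, mul_neg, neg_mul, Finset.sum_neg_distrib]
      rw [this] at h2'
      exact hproper _ h1 h2'
    -- diagonal entries vanish
    have hdiag : ∀ i, B i i = 0 := by
      intro i
      have := hq0 (Pi.single i 1)
      rw [quad_pair_aux] at this
      simpa using this
    -- all entries vanish
    ext i j
    simp only [Matrix.zero_apply]
    by_cases hij : i = j
    · subst hij; exact hdiag i
    by_contra hBij
    -- use the vector `single i 1 + single j d` with `d = (B i j)⁻¹`
    set d : D := (B i j)⁻¹ with hd
    have hkey := hq0 ((Pi.single i 1 : Fin n → D) + (Pi.single j d : Fin n → D))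
    rw [quad_add_aux, quad_pair_aux, quad_pair_aux, quad_pair_aux, quad_pair_aux] at hkey
    have hji : B j i = star (B i j) := by
      have h := congrFun (congrFun hB1 j) i
      simp only [Matrix.conjTranspose_apply] at h
      exact h.symm
    have hBd : B i j * d = 1 := mul_inv_cancel₀ hBij
    have hdB : star d * B j i = 1 := by
      rw [hji, ← StarMul.star_mul, hBd, star_one]
    rw [hdiag i, hdiag j] at hkey
    simp only [star_one, one_mul, mul_one, mul_zero, zero_mul, zero_add, add_zero] at hkey
    rw [hBd, hdB, one_add_one_eq_two] at hkey
    exact h2D hkey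
  · rw [hscal, hPeq]
end

section
/- Let D be an F-division algebra with involution ϑ, ℓ ≥ 1, and 𝒫 a prepositive cone on (M_ℓ(D),ϑ^t). For d ∈ Sym(D,ϑ) invertible, the following are equivalent: (1) d = tr(B) for some B ∈ 𝒫; (2) d = ϑ(X)^t B X for some B ∈ 𝒫 and X ∈ D^ℓ; (3) diag(d, d_2, …, d_ℓ) ∈ 𝒫 for some d_2,…,d_ℓ ∈ Sym(D,ϑ); (4) diag(d, 0, …, 0) ∈ 𝒫. -/
open Pointwise

private lemma aux_conj_std {D : Type*} [DivisionRing D] [StarRing D] (n : ℕ)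
    (B : Matrix (Fin (n+1)) (Fin (n+1)) D) (i : Fin (n+1)) :
    star (Matrix.single i 0 (1:D)) * B * Matrix.single i 0 1 =
      Matrix.diagonal (Pi.single 0 (B i i)) := by
  ext k l
  simp [Matrix.mul_apply, Matrix.star_apply, Matrix.single, Matrix.diagonal_apply,
    Pi.single_apply, apply_ite (star : D → D), ite_and, Finset.sum_ite_eq, eq_comm]
  split_ifs <;> simp_all

private lemma aux_conj_col {D : Type*} [DivisionRing D] [StarRing D] (n : ℕ)
    (B : Matrix (Fin (n+1)) (Fin (n+1)) D) (X : Fin (n+1) → D) :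
    star (Matrix.of fun i j => if j = 0 then X i else (0:D)) * B *
        (Matrix.of fun i j => if j = 0 then X i else (0:D)) =
      Matrix.diagonal (Pi.single 0 (∑ i, ∑ j, star (X i) * B i j * X j)) := by
  ext k l
  simp only [Matrix.mul_apply, Matrix.star_apply, Matrix.of_apply, Matrix.diagonal_apply,
    Pi.single_apply, apply_ite (star : D → D), star_zero, ite_mul, mul_ite, zero_mul, mul_zero,
    Finset.sum_ite_irrel, Finset.sum_const_zero]
  by_cases hk : k = 0 <;> by_cases hl : l = 0 <;>
    simp [hk, hl, eq_comm, Finset.mul_sum, Finset.sum_mul, mul_assoc]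
  exact Finset.sum_comm

/-- Characterization of the elements of `Tr_ℓ(PC)` for a prepositive cone `PC` on
`(M_ℓ(D), ϑ^t)`, `ℓ = n+1 ≥ 1`: for an invertible symmetric `d ∈ D`, the conditions
(1) `d` is the trace of an element of `PC`, (2) `d = ϑ(X)^t B X` for some `B ∈ PC` and
`X ∈ D^ℓ`, (3) `diag(d, d₂, …, d_ℓ) ∈ PC` for some symmetric `d₂, …, d_ℓ`,
(4) `diag(d, 0, …, 0) ∈ PC`, are equivalent. -/
theorem stmt_9 {F D : Type*} [Field F] [DivisionRing D] [Algebra F D] [StarRing D]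
    [FiniteDimensional F D] (h2 : (2 : F) ≠ 0)
    (hstar : ∀ c : F, star (algebraMap F D c) = algebraMap F D c)
    (n : ℕ)
    (PC : Set (Matrix (Fin (n + 1)) (Fin (n + 1)) D)) (hPC : IsPrepositiveCone F PC)
    (d : D) (hd : star d = d) (hdu : IsUnit d) :
    List.TFAE
      [ ∃ B ∈ PC, Matrix.trace B = d,
        ∃ B ∈ PC, ∃ X : Fin (n + 1) → D, (∑ i, ∑ j, star (X i) * B i j * X j) = d,
        ∃ v : Fin (n + 1) → D, v 0 = d ∧ (∀ i, star (v i) = v i) ∧ Matrix.diagonal v ∈ PC,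
        Matrix.diagonal (Pi.single (0 : Fin (n + 1)) d) ∈ PC ] := by
  obtain ⟨hsym, hne, hadd, hconj, hord, hprop⟩ := hPC
  have h0 : (0 : Matrix (Fin (n+1)) (Fin (n+1)) D) ∈ PC := by
    obtain ⟨p, hp⟩ := hne
    simpa using hconj 0 p hp
  have hsum : ∀ (s : Finset (Fin (n+1))) (f : Fin (n+1) → Matrix (Fin (n+1)) (Fin (n+1)) D),
      (∀ i ∈ s, f i ∈ PC) → ∑ i ∈ s, f i ∈ PC := by
    intro s f hf
    induction s using Finset.induction_on with
    | empty => simpa using h0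
    | insert _ _ hx ih =>
      rw [Finset.sum_insert hx]
      exact hadd _ (hf _ (Finset.mem_insert_self _ _)) _
        (ih fun i hi => hf i (Finset.mem_insert_of_mem hi))
  tfae_have 1 → 4 := by
    rintro ⟨B, hB, hBd⟩
    have : Matrix.diagonal (Pi.single (0 : Fin (n+1)) d) =
        ∑ i, star (Matrix.single i 0 (1:D)) * B * Matrix.single i 0 1 := by
      simp only [aux_conj_std]
      ext k l
      rw [← hBd]
      simp only [Matrix.sum_apply, Matrix.diagonal_apply, Pi.single_apply, Matrix.trace,
        Matrix.diag]
      split_ifs <;> simp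
    rw [this]
    exact hsum Finset.univ _ fun i _ => hconj _ B hB
  tfae_have 4 → 1 := by
    intro h
    exact ⟨_, h, by simp [Matrix.trace_diagonal, Pi.single_apply, Finset.sum_ite_eq]⟩
  tfae_have 4 → 3 := by
    intro h
    refine ⟨Pi.single 0 d, by simp, fun i => ?_, h⟩
    rcases eq_or_ne i 0 with rfl | hi
    · simpa using hd
    · simp [Pi.single_eq_of_ne hi]
  tfae_have 3 → 4 := by
    rintro ⟨v, hv0, -, hv⟩
    have := hconj (Matrix.single 0 0 1) _ hv
    rwa [aux_conj_std, Matrix.diagonal_apply_eq, hv0] at this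
  tfae_have 4 → 2 := by
    intro h
    refine ⟨_, h, Pi.single 0 1, ?_⟩
    simp [Pi.single_apply, Matrix.diagonal_apply, apply_ite (star : D → D), ite_and,
      Finset.sum_ite_eq, eq_comm]
  tfae_have 2 → 4 := by
    rintro ⟨B, hB, X, hX⟩
    have := hconj (Matrix.of fun i j => if j = 0 then X i else (0:D)) _ hB
    rwa [aux_conj_col, hX] at this
  tfae_finish
end

section
/- Let D be an F-division algebra with involution ϑ and 𝒫 a prepositive cone on (M_ℓ(D),ϑ^t) over an ordering P of F. Then Tr_ℓ(𝒫) := {tr(B) | B ∈ 𝒫} is a prepositive cone on (D,ϑ) over P. -/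
open Pointwise

section Aux

set_option linter.unusedSectionVars false

variable {D : Type*} [DivisionRing D] [StarRing D] {n : ℕ}

lemma aux_conjT (i j : Fin (n+1)) (c : D) :
    Matrix.conjTranspose (Matrix.single i j c) = Matrix.single j i (star c) := by
  ext a b
  simp only [Matrix.conjTranspose_apply, Matrix.single, Matrix.of_apply]
  by_cases h1 : j = a <;> by_cases h2 : i = b <;> simp [h1, h2]

lemma aux_key (a i j b : Fin (n+1)) (c d : D) (B : Matrix (Fin (n+1)) (Fin (n+1)) D) :
    Matrix.single a i c * B * Matrix.single j b d =
      Matrix.single a b (c * B i j * d) := by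
  ext x y
  simp only [Matrix.mul_apply, Matrix.single, Matrix.of_apply, ite_mul, mul_ite,
    zero_mul, mul_zero, Finset.sum_ite_eq, Finset.sum_ite_eq', Finset.mem_univ, if_true]
  by_cases h1 : a = x <;> by_cases h2 : b = y <;> simp [h1, h2]

lemma aux_sum_std (k : Fin (n+1)) (f : Fin (n+1) → D) :
    Matrix.single k k (∑ i, f i) = ∑ i, Matrix.single k k (f i) := by
  ext x y
  simp only [Matrix.sum_apply, Matrix.single, Matrix.of_apply]
  by_cases h : k = x ∧ k = y <;> simp [h]

lemma aux_diag_sum (t : D) :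
    Matrix.diagonal (fun _ : Fin (n+1) => t) = ∑ k, Matrix.single k k t := by
  ext x y
  simp only [Matrix.sum_apply, Matrix.single, Matrix.of_apply, Matrix.diagonal_apply]
  by_cases h : x = y
  · subst h; simp
  · rw [if_neg h]
    symm
    exact Finset.sum_eq_zero fun k _ => by
      rw [if_neg]; rintro ⟨rfl, rfl⟩; exact h rfl

lemma aux_trace_conj_diag (x : D) (B : Matrix (Fin (n+1)) (Fin (n+1)) D) :
    Matrix.trace (star (Matrix.diagonal fun _ : Fin (n+1) => x) * B *
      Matrix.diagonal (fun _ : Fin (n+1) => x)) = star x * Matrix.trace B * x := by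
  rw [Matrix.star_eq_conjTranspose, Matrix.diagonal_conjTranspose]
  have h1 : ∀ i : Fin (n+1),
      (Matrix.diagonal (star fun _ : Fin (n+1) => x) * B *
        Matrix.diagonal (fun _ : Fin (n+1) => x)) i i = star x * (B i i * x) := by
    intro i
    rw [Matrix.mul_diagonal, Matrix.diagonal_mul, mul_assoc]
    rfl
  have h2 : Matrix.trace (Matrix.diagonal (star fun _ : Fin (n+1) => x) * B *
      Matrix.diagonal (fun _ : Fin (n+1) => x)) = ∑ i, star x * (B i i * x) :=
    Finset.sum_congr rfl fun i _ => h1 i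
  rw [h2, ← Finset.mul_sum, ← Finset.sum_mul, mul_assoc]
  rfl

end Aux

/-- If `PC` is a prepositive cone on `(M_ℓ(D), ϑ^t)` over `P` (`ℓ = n+1 ≥ 1`), then
`Tr_ℓ(PC) = {tr B | B ∈ PC}` is a prepositive cone on `(D, ϑ)` over `P`. -/
theorem stmt_10 {F D : Type*} [Field F] [DivisionRing D] [Algebra F D] [StarRing D]
    [FiniteDimensional F D] (h2 : (2 : F) ≠ 0)
    (hstar : ∀ c : F, star (algebraMap F D c) = algebraMap F D c)
    (n : ℕ) (P : Set F)
    (PC : Set (Matrix (Fin (n + 1)) (Fin (n + 1)) D)) (hPC : IsPrepositiveConeOver F P PC) :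
    IsPrepositiveConeOver F P {d : D | ∃ B ∈ PC, Matrix.trace B = d} := by
  obtain ⟨⟨hsym, ⟨p0, hp0⟩, hadd, hconj, hord, hprop⟩, hP⟩ := hPC
  set T : Set D := {d : D | ∃ B ∈ PC, Matrix.trace B = d} with hT
  have hordP : IsOrdering P := hP ▸ hord
  have h2D : (2 : D) ≠ 0 := by
    intro h
    apply h2
    have h' : algebraMap F D 2 = 0 := by rw [map_ofNat]; exact_mod_cast h
    exact (map_eq_zero_iff _ (algebraMap F D).injective).mp h'
  have h0 : (0 : Matrix (Fin (n + 1)) (Fin (n + 1)) D) ∈ PC := by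
    have := hconj 0 p0 hp0
    simpa using this
  have hdiagmem : ∀ B ∈ PC, ∀ i k : Fin (n + 1),
      Matrix.single k k (B i i) ∈ PC := by
    intro B hB i k
    have := hconj (Matrix.single i k (1 : D)) B hB
    rwa [Matrix.star_eq_conjTranspose, aux_conjT, star_one, aux_key, one_mul, mul_one] at this
  have hscalarMat : ∀ B ∈ PC, Matrix.diagonal (fun _ : Fin (n+1) => Matrix.trace B) ∈ PC := by
    intro B hB
    have hmem : ∀ k : Fin (n + 1), Matrix.single k k (Matrix.trace B) ∈ PC := by
      intro k
      have heq : Matrix.single k k (Matrix.trace B) =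
          ∑ i : Fin (n + 1), Matrix.single k k (B i i) := aux_sum_std k _
      rw [heq]
      exact Finset.sum_induction _ (· ∈ PC) (fun a b ha hb => hadd a ha b hb) h0
        (fun i _ => hdiagmem B hB i k)
    rw [aux_diag_sum]
    exact Finset.sum_induction _ (· ∈ PC) (fun a b ha hb => hadd a ha b hb) h0
      (fun k _ => hmem k)
  -- properness of T
  have hTprop : ∀ t ∈ T, -t ∈ T → t = 0 := by
    rintro t ⟨B, hB, rfl⟩ ⟨C, hC, hCt⟩
    have d1 := hscalarMat B hB
    have d2 := hscalarMat C hC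
    rw [hCt] at d2
    have d2' : -Matrix.diagonal (fun _ : Fin (n + 1) => Matrix.trace B) ∈ PC := by
      convert d2 using 1
      ext a b
      by_cases hab : a = b <;> simp [hab]
    have hz := hprop _ d1 d2'
    have := congrFun (congrFun hz 0) 0
    simpa using this
  -- T is closed under u • for u ∈ P
  have hPact : ∀ u ∈ P, ∀ t ∈ T, u • t ∈ T := by
    rintro u hu t ⟨B, hB, rfl⟩
    rw [← hP] at hu
    exact ⟨u • B, hu B hB, Matrix.trace_smul u B⟩
  -- closure of T under conjugation
  have hTconj : ∀ x : D, ∀ t ∈ T, star x * t * x ∈ T := by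
    rintro x t ⟨B, hB, rfl⟩
    exact ⟨star (Matrix.diagonal fun _ : Fin (n+1) => x) * B *
      Matrix.diagonal (fun _ : Fin (n+1) => x), hconj _ B hB, aux_trace_conj_diag x B⟩
  -- the quadratic values
  have hquad : ∀ B ∈ PC, ∀ i j : Fin (n + 1), ∀ d : D,
      B i i + B i j * d + star d * B j i + star d * B j j * d ∈ T := by
    intro B hB i j d
    have hm := hconj (Matrix.single i 0 (1 : D) + Matrix.single j 0 d) B hB
    rw [Matrix.star_eq_conjTranspose, Matrix.conjTranspose_add, aux_conjT, aux_conjT,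
      star_one] at hm
    refine ⟨_, hm, ?_⟩
    simp only [add_mul, mul_add, aux_key, one_mul, mul_one]
    simp only [Matrix.trace_add, Matrix.trace_single_eq_same]
    abel
  -- if every element of T is zero, we get a contradiction
  have hTnontriv : ¬ (∀ t ∈ T, t = (0 : D)) := by
    intro hT0
    have hPCzero : ∀ B ∈ PC, B = 0 := by
      intro B hB
      have hdiag0 : ∀ i : Fin (n + 1), B i i = 0 := by
        intro i
        have hmem : Matrix.trace (Matrix.single i i (B i i)) ∈ T :=
          ⟨_, hdiagmem B hB i i, rfl⟩
        have := hT0 _ hmem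
        rwa [Matrix.trace_single_eq_same] at this
      ext i j
      by_cases hij : i = j
      · subst hij; simpa using hdiag0 i
      · have hji : B j i = star (B i j) := by
          have hs := hsym B hB
          have := congrFun (congrFun hs j) i
          rw [Matrix.star_eq_conjTranspose] at this
          simpa [Matrix.conjTranspose_apply] using this.symm
        have hval : ∀ d : D, B i j * d + star d * B j i = 0 := by
          intro d
          have := hT0 _ (hquad B hB i j d)
          simpa only [hdiag0, mul_zero, zero_mul, zero_add, add_zero] using this
        have h1 := hval 1
        rw [mul_one, star_one, one_mul, hji] at h1
        have hneg : star (B i j) = -(B i j) := (neg_eq_of_add_eq_zero_right h1).symm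
        have hb := hval (B i j)
        rw [hji, hneg, neg_mul_neg] at hb
        have h2b : (2 : D) * (B i j * B i j) = 0 := by rw [two_mul]; exact hb
        have hbb : B i j * B i j = 0 := (mul_eq_zero.mp h2b).resolve_left h2D
        simpa using mul_self_eq_zero.mp hbb
    have hPuniv : P = Set.univ := by
      rw [← hP]
      ext u
      simp only [Set.mem_setOf_eq, Set.mem_univ, iff_true]
      intro p hp
      rw [hPCzero p hp]
      simpa using h0
    have h1 : (1 : F) ∈ P := hPuniv ▸ Set.mem_univ _
    have hm1 : -(1 : F) ∈ P := hPuniv ▸ Set.mem_univ _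
    exact one_ne_zero (hordP.2.2.2 1 h1 hm1)
  -- scalar set of T equals P
  have hscal : {u : F | ∀ p ∈ T, u • p ∈ T} = P := by
    ext u
    simp only [Set.mem_setOf_eq]
    constructor
    · intro hu
      rcases hordP.2.2.1 u with h | h
      · exact h
      · push_neg at hTnontriv
        obtain ⟨t, ht, htne⟩ := hTnontriv
        have ht1 : u • t ∈ T := hu t ht
        have ht2 : -(u • t) ∈ T := by
          have := hPact _ h t ht
          rwa [neg_smul] at this
        have hz := hTprop _ ht1 ht2
        have hu0 : u = 0 := by
          rcases smul_eq_zero.mp hz with h' | h'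
          · exact h'
          · exact absurd h' htne
        subst hu0
        rcases hordP.2.2.1 0 with h' | h'
        · exact h'
        · rwa [neg_zero] at h'
    · intro hu p hp
      exact hPact u hu p hp
  refine ⟨⟨?_, ?_, ?_, ?_, ?_, hTprop⟩, hscal⟩
  · rintro a ⟨B, hB, rfl⟩
    rw [← Matrix.trace_conjTranspose, ← Matrix.star_eq_conjTranspose, hsym B hB]
  · exact ⟨0, 0, h0, by simp⟩
  · rintro a ⟨B, hB, rfl⟩ b ⟨C, hC, rfl⟩
    exact ⟨B + C, hadd B hB C hC, Matrix.trace_add B C⟩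
  · exact hTconj
  · rw [hscal]; exact hordP
end

section
/- Let D be an F-division algebra with involution ϑ and ℓ ≥ 1. The maps 𝒫 ↦ PSD_ℓ(𝒫) from prepositive cones on (D,ϑ) to prepositive cones on (M_ℓ(D),ϑ^t), and 𝒬 ↦ Tr_ℓ(𝒬) in the opposite direction, are mutually inverse bijections. -/
set_option linter.unusedSectionVars false
set_option linter.unusedVariables false
set_option maxHeartbeats 1000000


open Pointwise Matrix

/-- `PSD_ℓ` of a subset of a division algebra with involution. -/
def PSDset {D : Type*} [DivisionRing D] [StarRing D] (n : ℕ) (PC : Set D) :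
    Set (Matrix (Fin n) (Fin n) D) :=
  {B | Bᴴ = B ∧ ∀ X : Fin n → D, (∑ i, ∑ j, star (X i) * B i j * X j) ∈ PC}

/-- `Tr_ℓ` of a set of matrices. -/
def TrSet {D : Type*} [DivisionRing D] [StarRing D] {n : ℕ}
    (QC : Set (Matrix (Fin n) (Fin n) D)) : Set D :=
  {d | ∃ B ∈ QC, Matrix.trace B = d}


section Helpers
variable {D : Type*} [DivisionRing D] [StarRing D] {ℓ : ℕ}



private def qf (B : Matrix (Fin ℓ) (Fin ℓ) D) (X : Fin ℓ → D) : D :=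
  ∑ i, ∑ j, star (X i) * B i j * X j

private lemma qf_eq_dot (B : Matrix (Fin ℓ) (Fin ℓ) D) (X : Fin ℓ → D) :
    qf B X = star X ⬝ᵥ B *ᵥ X := by
  simp [qf, dotProduct, Matrix.mulVec, Finset.mul_sum, mul_assoc]

private lemma qf_conj (M B : Matrix (Fin ℓ) (Fin ℓ) D) (X : Fin ℓ → D) :
    qf (Mᴴ * B * M) X = qf B (M *ᵥ X) := by
  rw [qf_eq_dot, qf_eq_dot, ← Matrix.mulVec_mulVec, ← Matrix.mulVec_mulVec,
    Matrix.dotProduct_mulVec, ← Matrix.star_mulVec, Matrix.mulVec_mulVec]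

private lemma qf_zero (X : Fin ℓ → D) : qf (0 : Matrix (Fin ℓ) (Fin ℓ) D) X = 0 := by
  simp [qf]

private lemma qf_add (B C : Matrix (Fin ℓ) (Fin ℓ) D) (X : Fin ℓ → D) :
    qf (B + C) X = qf B X + qf C X := by
  simp [qf, mul_add, add_mul, Finset.sum_add_distrib]

private lemma qf_neg (B : Matrix (Fin ℓ) (Fin ℓ) D) (X : Fin ℓ → D) :
    qf (-B) X = -qf B X := by
  simp [qf, Finset.sum_neg_distrib]

private lemma qf_single (B : Matrix (Fin ℓ) (Fin ℓ) D) (i : Fin ℓ) (a : D) :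
    qf B (Pi.single i a) = star a * B i i * a := by
  rw [qf_eq_dot, ← Pi.single_star, Matrix.mulVec_single, single_dotProduct, Pi.smul_apply, Matrix.col_apply,
    op_smul_eq_mul, ← mul_assoc]

private lemma qf_pair (B : Matrix (Fin ℓ) (Fin ℓ) D) {i j : Fin ℓ} (hij : i ≠ j) (a b : D) :
    qf B (Pi.single i a + Pi.single j b) =
      star a * (B i i * a) + star a * (B i j * b) + star b * (B j i * a) + star b * (B j j * b) := by
  rw [qf_eq_dot, star_add, ← Pi.single_star, ← Pi.single_star, Matrix.mulVec_add,
    Matrix.mulVec_single, Matrix.mulVec_single]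
  simp only [add_dotProduct, dotProduct_add, single_dotProduct, Pi.smul_apply, Matrix.col_apply,
    op_smul_eq_mul]
  abel

private lemma herm_conj' (P B : Matrix (Fin ℓ) (Fin ℓ) D) (hB : Bᴴ = B) :
    (Pᴴ * B * P)ᴴ = Pᴴ * B * P := by
  simp [Matrix.conjTranspose_mul, hB, mul_assoc]

private lemma mat_zero_of_qf (h2D : (2 : D) ≠ 0) {B : Matrix (Fin ℓ) (Fin ℓ) D}
    (hB : Bᴴ = B) (h : ∀ X, qf B X = 0) : B = 0 := by
  have hdiag : ∀ i, B i i = 0 := by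
    intro i
    have := h (Pi.single i 1)
    rwa [qf_single, star_one, one_mul, mul_one] at this
  ext i j
  by_cases hij : i = j
  · subst hij; simp [hdiag i]
  · have hji : B j i = star (B i j) := by
      conv_lhs => rw [← hB]
      simp
    have key : ∀ b : D, B i j * b + star b * star (B i j) = 0 := by
      intro b
      have := h (Pi.single i 1 + Pi.single j b)
      rw [qf_pair B hij] at this
      rw [hdiag i, hdiag j, hji] at this
      simpa [mul_assoc] using this
    set c := B i j with hc
    have h1 : c + star c = 0 := by simpa using key 1
    have hsc : star c = -c := eq_neg_of_add_eq_zero_left (by rw [add_comm]; exact h1)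
    have h2 : c * c + star c * star c = 0 := by simpa [mul_assoc] using key c
    rw [hsc, neg_mul_neg] at h2
    have : (2 : D) * (c * c) = 0 := by rw [two_mul]; exact h2
    have hcc : c * c = 0 := by
      rcases mul_eq_zero.mp this with h | h
      · exact absurd h h2D
      · exact h
    exact mul_self_eq_zero.mp hcc




private lemma conj_entry (P B : Matrix (Fin ℓ) (Fin ℓ) D) (a b : Fin ℓ) :
    (Pᴴ * B * P) a b = ∑ k, ∑ l, star (P k a) * B k l * P l b := by
  simp only [Matrix.mul_apply, Matrix.conjTranspose_apply, Finset.sum_mul]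
  exact Finset.sum_comm


private def e00 (p : D) : Matrix (Fin (m+1)) (Fin (m+1)) D :=
  Matrix.of fun i j => if i = 0 then if j = 0 then p else 0 else 0

private lemma e00_conjT (p : D) : (e00 (m := m) p)ᴴ = e00 (star p) := by
  ext a b
  by_cases ha : a = 0 <;> by_cases hb : b = 0 <;>
    simp [e00, Matrix.conjTranspose_apply, ha, hb]

private lemma e00_trace (p : D) : Matrix.trace (e00 (m := m) p) = p := by
  simp [Matrix.trace, Matrix.diag, e00]

private lemma e00_add (p q : D) : e00 (m := m) (p + q) = e00 p + e00 q := by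
  ext a b
  by_cases ha : a = 0 <;> by_cases hb : b = 0 <;> simp [e00, ha, hb]

private lemma e00_zero : e00 (m := m) (0 : D) = 0 := by
  ext a b; by_cases ha : a = 0 <;> by_cases hb : b = 0 <;> simp [e00, ha, hb]

private lemma e00_neg (p : D) : e00 (m := m) (-p) = -(e00 p) := by
  ext a b; by_cases ha : a = 0 <;> by_cases hb : b = 0 <;> simp [e00, ha, hb]

private lemma e00_sum {ι : Type*} (s : Finset ι) (f : ι → D) :
    e00 (m := m) (∑ i ∈ s, f i) = ∑ i ∈ s, e00 (f i) := by
  induction s using Finset.cons_induction with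
  | empty => simp [e00_zero]
  | cons a s ha ih => rw [Finset.sum_cons, Finset.sum_cons, e00_add, ih]

private lemma e00_smul {F : Type*} [Field F] [Algebra F D] (u : F) (p : D) :
    u • e00 (m := m) p = e00 (u • p) := by
  ext a b; by_cases ha : a = 0 <;> by_cases hb : b = 0 <;> simp [e00, ha, hb]

private lemma e00_inj {p : D} (h : e00 (m := m) p = 0) : p = 0 := by
  have := congrFun (congrFun h 0) 0
  simpa [e00] using this

private def colM (X : Fin (m+1) → D) : Matrix (Fin (m+1)) (Fin (m+1)) D :=
  Matrix.of fun i j => if j = 0 then X i else 0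

private lemma colM_conj (B : Matrix (Fin (m+1)) (Fin (m+1)) D) (X : Fin (m+1) → D) :
    (colM X)ᴴ * B * colM X = e00 (qf B X) := by
  ext a b
  rw [conj_entry]
  by_cases ha : a = 0 <;> by_cases hb : b = 0 <;>
    simp [colM, e00, ha, hb, qf]

private def eii (i : Fin (m+1)) (p : D) : Matrix (Fin (m+1)) (Fin (m+1)) D :=
  Matrix.of fun k l => if k = i then if l = i then p else 0 else 0

private def sMat (i : Fin (m+1)) : Matrix (Fin (m+1)) (Fin (m+1)) D :=
  Matrix.of fun k l => if k = 0 then if l = i then 1 else 0 else 0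

private lemma sMat_conj (i : Fin (m+1)) (C : Matrix (Fin (m+1)) (Fin (m+1)) D) :
    (sMat i)ᴴ * C * sMat i = eii i (C 0 0) := by
  ext a b
  rw [conj_entry]
  by_cases ha : a = i <;> by_cases hb : b = i <;>
    simp [sMat, eii, ha, hb, apply_ite (star : D → D)]

private lemma diagonal_eq_sum_eii (d : Fin (m+1) → D) :
    Matrix.diagonal d = ∑ i, eii i (d i) := by
  ext a b
  rw [Matrix.sum_apply]
  by_cases hab : a = b <;>
    simp [eii, Matrix.diagonal_apply, hab, eq_comm]





private def rowM (κ : Fin ℓ) (c : Fin ℓ → D) : Matrix (Fin ℓ) (Fin ℓ) D :=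
  Matrix.of fun i l => if i = κ then c l else 0

private lemma mul_rowM_apply (B : Matrix (Fin ℓ) (Fin ℓ) D) (κ : Fin ℓ) (c : Fin ℓ → D)
    (i l : Fin ℓ) : (B * rowM κ c) i l = B i κ * c l := by
  simp [Matrix.mul_apply, rowM, mul_ite, Finset.sum_ite_eq']

private lemma rowM_conjT (κ : Fin ℓ) (c : Fin ℓ → D) :
    (rowM κ c)ᴴ = Matrix.of fun i l => if l = κ then star (c i) else 0 := by
  ext i l
  by_cases h : l = κ <;> simp [rowM, Matrix.conjTranspose_apply, h]

private lemma rowMH_mul_apply (B : Matrix (Fin ℓ) (Fin ℓ) D) (κ : Fin ℓ) (c : Fin ℓ → D)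
    (i l : Fin ℓ) : ((rowM κ c)ᴴ * B) i l = star (c i) * B κ l := by
  rw [rowM_conjT]
  simp [Matrix.mul_apply, ite_mul, Finset.sum_ite_eq']

private lemma rowM_sq (κ : Fin ℓ) (c : Fin ℓ → D) (hcκ : c κ = 0) :
    rowM κ c * rowM κ c = 0 := by
  ext i l
  rw [mul_rowM_apply]
  simp [rowM, hcκ]

private lemma rowM_unit (κ : Fin ℓ) (c : Fin ℓ → D) (hcκ : c κ = 0) :
    IsUnit (1 + rowM κ c) := by
  have h1 : (1 + rowM κ c) * (1 - rowM κ c) = 1 := by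
    have : (1 + rowM κ c) * (1 - rowM κ c) = 1 - rowM κ c * rowM κ c := by noncomm_ring
    rw [this, rowM_sq κ c hcκ, sub_zero]
  have h2 : (1 - rowM κ c) * (1 + rowM κ c) = 1 := by
    have : (1 - rowM κ c) * (1 + rowM κ c) = 1 - rowM κ c * rowM κ c := by noncomm_ring
    rw [this, rowM_sq κ c hcκ, sub_zero]
  exact ⟨⟨1 + rowM κ c, 1 - rowM κ c, h1, h2⟩, rfl⟩

private lemma conj_rowM_apply (B : Matrix (Fin ℓ) (Fin ℓ) D) (κ : Fin ℓ) (c : Fin ℓ → D)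
    (i l : Fin ℓ) :
    (((1 + rowM κ c : Matrix (Fin ℓ) (Fin ℓ) D))ᴴ * B * (1 + rowM κ c)) i l
      = B i l + star (c i) * B κ l + B i κ * c l + star (c i) * (B κ κ * c l) := by
  have hexp : (1 + rowM κ c)ᴴ * B * (1 + rowM κ c)
      = B + (rowM κ c)ᴴ * B + B * rowM κ c + (rowM κ c)ᴴ * (B * rowM κ c) := by
    rw [Matrix.conjTranspose_add, Matrix.conjTranspose_one]
    noncomm_ring
  rw [hexp]
  simp only [Matrix.add_apply, rowMH_mul_apply, mul_rowM_apply]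

private def entryM (r s : Fin ℓ) (e : D) : Matrix (Fin ℓ) (Fin ℓ) D :=
  Matrix.of fun i l => if i = r then if l = s then e else 0 else 0

private lemma mul_entryM_apply (B : Matrix (Fin ℓ) (Fin ℓ) D) (r s : Fin ℓ) (e : D)
    (i l : Fin ℓ) : (B * entryM r s e) i l = if l = s then B i r * e else 0 := by
  by_cases h : l = s <;>
    simp [Matrix.mul_apply, entryM, mul_ite, Finset.sum_ite_eq', h]

private lemma entryM_conjT (r s : Fin ℓ) (e : D) : (entryM r s e)ᴴ = entryM s r (star e) := by
  ext i l
  by_cases h1 : i = s <;> by_cases h2 : l = r <;>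
    simp [entryM, Matrix.conjTranspose_apply, h1, h2]

private lemma entryM_mul_apply (B : Matrix (Fin ℓ) (Fin ℓ) D) (r s : Fin ℓ) (e : D)
    (i l : Fin ℓ) : (entryM r s e * B) i l = if i = r then e * B s l else 0 := by
  by_cases h : i = r <;>
    simp [Matrix.mul_apply, entryM, ite_mul, Finset.sum_ite_eq', h]

private lemma entryM_sq (r s : Fin ℓ) (e : D) (hrs : r ≠ s) :
    entryM r s e * entryM r s e = 0 := by
  ext i l
  rw [mul_entryM_apply]
  simp [entryM, hrs]

private lemma entryM_unit (r s : Fin ℓ) (e : D) (hrs : r ≠ s) :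
    IsUnit (1 + entryM r s e) := by
  have h1 : (1 + entryM r s e) * (1 - entryM r s e) = 1 := by
    have : (1 + entryM r s e) * (1 - entryM r s e) = 1 - entryM r s e * entryM r s e := by
      noncomm_ring
    rw [this, entryM_sq r s e hrs, sub_zero]
  have h2 : (1 - entryM r s e) * (1 + entryM r s e) = 1 := by
    have : (1 - entryM r s e) * (1 + entryM r s e) = 1 - entryM r s e * entryM r s e := by
      noncomm_ring
    rw [this, entryM_sq r s e hrs, sub_zero]
  exact ⟨⟨1 + entryM r s e, 1 - entryM r s e, h1, h2⟩, rfl⟩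

private lemma conj_entryM_apply (B : Matrix (Fin ℓ) (Fin ℓ) D) (r s : Fin ℓ) (e : D)
    (i l : Fin ℓ) :
    (((1 + entryM r s e : Matrix (Fin ℓ) (Fin ℓ) D))ᴴ * B * (1 + entryM r s e)) i l
      = B i l + (if i = s then star e * B r l else 0) + (if l = s then B i r * e else 0)
        + (if i = s then star e * (if l = s then B r r * e else 0) else 0) := by
  have hexp : (1 + entryM r s e)ᴴ * B * (1 + entryM r s e)
      = B + (entryM r s e)ᴴ * B + B * entryM r s e + (entryM r s e)ᴴ * (B * entryM r s e) := by
    rw [Matrix.conjTranspose_add, Matrix.conjTranspose_one]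
    noncomm_ring
  rw [hexp, entryM_conjT]
  simp only [Matrix.add_apply, entryM_mul_apply, mul_entryM_apply]

private lemma herm_entry {B : Matrix (Fin ℓ) (Fin ℓ) D} (hB : Bᴴ = B) (i j : Fin ℓ) :
    star (B i j) = B j i := by
  conv_rhs => rw [← hB]
  simp


/-- Clearing step: pivot at `κ` is nonzero, clear row and column `κ`. -/
private lemma stepA {k : ℕ} (B : Matrix (Fin ℓ) (Fin ℓ) D) (hB : Bᴴ = B) (κ : Fin ℓ)
    (hκ : (κ : ℕ) = k)
    (hinv : ∀ i j : Fin ℓ, i ≠ j → ((i : ℕ) < k ∨ (j : ℕ) < k) → B i j = 0)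
    (ha : B κ κ ≠ 0) :
    ∃ P : Matrix (Fin ℓ) (Fin ℓ) D, IsUnit P ∧
      ∀ i j : Fin ℓ, i ≠ j → ((i : ℕ) < k + 1 ∨ (j : ℕ) < k + 1) → (Pᴴ * B * P) i j = 0 := by
  set a := B κ κ with haa
  set c : Fin ℓ → D := fun l => if l = κ then 0 else -(a⁻¹ * B κ l) with hc
  have hcκ : c κ = 0 := by simp [hc]
  have hczero : ∀ i : Fin ℓ, (i : ℕ) < k → c i = 0 := by
    intro i hi
    have hiκ : i ≠ κ := by
      intro h; rw [h, hκ] at hi; omega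
    have : B κ i = 0 := hinv κ i (Ne.symm hiκ) (Or.inr hi)
    simp [hc, hiκ, this]
  refine ⟨1 + rowM κ c, rowM_unit κ c hcκ, ?_⟩
  intro i j hij hlt
  rw [conj_rowM_apply]
  have hstar_a : star a = a := herm_entry hB κ κ
  have hBzero : ∀ i : Fin ℓ, (i : ℕ) < k → B κ i = 0 ∧ B i κ = 0 ∧ B i j = 0 ∨ True := fun _ _ => Or.inr trivial
  rcases hlt with hlt | hlt
  · rcases Nat.lt_succ_iff_lt_or_eq.mp hlt with hlt | heq
    · -- i < k
      have hiκ : i ≠ κ := by intro h; rw [h, hκ] at hlt; omega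
      have h1 : B i j = 0 := hinv i j hij (Or.inl hlt)
      have h2 : B i κ = 0 := hinv i κ hiκ (Or.inl hlt)
      have h3 : c i = 0 := hczero i hlt
      simp [h1, h2, h3]
    · -- i = κ
      have hiκ : i = κ := Fin.ext (by rw [heq, hκ])
      have hjκ : j ≠ κ := by rw [hiκ] at hij; exact fun h => hij h.symm
      have hcj : c j = -(a⁻¹ * B κ j) := by simp [hc, hjκ]
      rw [hiκ, hcκ, hcj]
      simp only [star_zero, zero_mul, add_zero, zero_add]
      rw [mul_neg, ← mul_assoc, mul_inv_cancel₀ ha, one_mul, add_neg_cancel]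
  · rcases Nat.lt_succ_iff_lt_or_eq.mp hlt with hlt | heq
    · -- j < k
      have hjκ : j ≠ κ := by intro h; rw [h, hκ] at hlt; omega
      have h1 : B i j = 0 := hinv i j hij (Or.inr hlt)
      have h2 : B κ j = 0 := hinv κ j (Ne.symm hjκ) (Or.inr hlt)
      have h3 : c j = 0 := hczero j hlt
      simp [h1, h2, h3]
    · -- j = κ
      have hjκ : j = κ := Fin.ext (by rw [heq, hκ])
      have hiκ : i ≠ κ := by rw [hjκ] at hij; exact hij
      have hci : c i = -(a⁻¹ * B κ i) := by simp [hc, hiκ]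
      rw [hjκ, hcκ, hci]
      have hsci : star (-(a⁻¹ * B κ i)) = -(B i κ * a⁻¹) := by
        rw [star_neg, StarMul.star_mul, star_inv₀, hstar_a, herm_entry hB κ i]
      rw [hsci]
      simp only [mul_zero, add_zero]
      rw [neg_mul, mul_assoc, inv_mul_cancel₀ ha, mul_one, add_neg_cancel]

/-- Pivot-creation step: diagonal entry at `κ` is zero but some entry in row `κ` is not. -/
private lemma stepB {k : ℕ} (h2D : (2 : D) ≠ 0) (B : Matrix (Fin ℓ) (Fin ℓ) D) (hB : Bᴴ = B)
    (κ : Fin ℓ) (hκ : (κ : ℕ) = k)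
    (hinv : ∀ i j : Fin ℓ, i ≠ j → ((i : ℕ) < k ∨ (j : ℕ) < k) → B i j = 0)
    (hBκκ : B κ κ = 0) (j₀ : Fin ℓ) (hj₀ : B κ j₀ ≠ 0) :
    ∃ Q : Matrix (Fin ℓ) (Fin ℓ) D, IsUnit Q ∧
      (∀ i j : Fin ℓ, i ≠ j → ((i : ℕ) < k ∨ (j : ℕ) < k) → (Qᴴ * B * Q) i j = 0) ∧
      (Qᴴ * B * Q) κ κ ≠ 0 := by
  have hj₀κ : j₀ ≠ κ := by intro h; rw [h] at hj₀; exact hj₀ hBκκ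
  set b := B κ j₀ with hb
  -- generic facts about the transform with parameter e
  have hinv' : ∀ e : D, ∀ i j : Fin ℓ, i ≠ j → ((i : ℕ) < k ∨ (j : ℕ) < k) →
      (((1 + entryM j₀ κ e : Matrix (Fin ℓ) (Fin ℓ) D))ᴴ * B * (1 + entryM j₀ κ e)) i j = 0 := by
    intro e i j hij hlt
    rw [conj_entryM_apply]
    rcases hlt with hlt | hlt
    · have hiκ : i ≠ κ := by intro h; rw [h, hκ] at hlt; omega
      have h1 : B i j = 0 := hinv i j hij (Or.inl hlt)
      have hij₀ : i ≠ j₀ := by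
        intro h
        have hκi : κ ≠ i := by intro h'; rw [← h', hκ] at hlt; omega
        have : B κ i = 0 := hinv κ i hκi (Or.inr hlt)
        rw [h] at this
        exact hj₀ this
      have h2 : B i j₀ = 0 := hinv i j₀ hij₀ (Or.inl hlt)
      simp [h1, h2, hiκ]
    · have hjκ : j ≠ κ := by intro h; rw [h, hκ] at hlt; omega
      have h1 : B i j = 0 := hinv i j hij (Or.inr hlt)
      have hj₀j : j₀ ≠ j := by
        intro h
        have hκj : κ ≠ j := by intro h'; rw [← h', hκ] at hlt; omega
        have : B κ j = 0 := hinv κ j hκj (Or.inr hlt)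
        rw [← h] at this
        exact hj₀ this
      have h2 : B j₀ j = 0 := hinv j₀ j hj₀j (Or.inr hlt)
      simp [h1, h2, hjκ]
  have hval : ∀ e : D,
      (((1 + entryM j₀ κ e : Matrix (Fin ℓ) (Fin ℓ) D))ᴴ * B * (1 + entryM j₀ κ e)) κ κ
        = star e * star b + b * e + star e * (B j₀ j₀ * e) := by
    intro e
    rw [conj_entryM_apply]
    simp only [hBκκ, zero_add, eq_self_iff_true, if_true]
    rw [← herm_entry hB κ j₀]
  have hb0 : b ≠ 0 := hj₀
  have hsb : star (b⁻¹ : D) * star b = 1 := by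
    rw [← StarMul.star_mul, mul_inv_cancel₀ hb0, star_one]
  set g := star (b⁻¹ : D) * (B j₀ j₀ * b⁻¹) with hg
  have hv1 : (((1 + entryM j₀ κ b⁻¹ : Matrix (Fin ℓ) (Fin ℓ) D))ᴴ * B
      * (1 + entryM j₀ κ b⁻¹)) κ κ = (1 + 1 : D) + g := by
    rw [hval, hsb, mul_inv_cancel₀ hb0]
  have hv2 : (((1 + entryM j₀ κ (-b⁻¹) : Matrix (Fin ℓ) (Fin ℓ) D))ᴴ * B
      * (1 + entryM j₀ κ (-b⁻¹))) κ κ = -(1 + 1 : D) + g := by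
    rw [hval, star_neg, neg_mul, hsb, mul_neg b, mul_inv_cancel₀ hb0,
      mul_neg (B j₀ j₀), neg_mul_neg]
    abel
  by_cases hvz : (1 + 1 : D) + g = 0
  · refine ⟨1 + entryM j₀ κ (-b⁻¹), entryM_unit j₀ κ _ hj₀κ, hinv' _, ?_⟩
    rw [hv2]
    have hgeq : g = -(1 + 1 : D) := eq_neg_of_add_eq_zero_right hvz
    rw [hgeq]
    intro hcontra
    rw [← neg_add, neg_eq_zero] at hcontra
    have h4 : (2 : D) * 2 = 0 := by
      rw [two_mul, ← one_add_one_eq_two]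
      exact hcontra
    rcases mul_eq_zero.mp h4 with h | h <;> exact h2D h
  · exact ⟨1 + entryM j₀ κ b⁻¹, entryM_unit j₀ κ _ hj₀κ, hinv' _, by rw [hv1]; exact hvz⟩

private lemma conj_conj (P Q B : Matrix (Fin ℓ) (Fin ℓ) D) :
    (Q * P)ᴴ * B * (Q * P) = Pᴴ * (Qᴴ * B * Q) * P := by
  rw [Matrix.conjTranspose_mul]
  noncomm_ring

private lemma diag_aux (h2D : (2 : D) ≠ 0) :
    ∀ m k : ℕ, ℓ ≤ k + m → ∀ B : Matrix (Fin ℓ) (Fin ℓ) D, Bᴴ = B →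
    (∀ i j : Fin ℓ, i ≠ j → ((i : ℕ) < k ∨ (j : ℕ) < k) → B i j = 0) →
    ∃ P : Matrix (Fin ℓ) (Fin ℓ) D, IsUnit P ∧
      ∃ d : Fin ℓ → D, Pᴴ * B * P = Matrix.diagonal d := by
  intro m
  induction m with
  | zero =>
    intro k hk B hB hinv
    refine ⟨1, isUnit_one, fun i => B i i, ?_⟩
    rw [Matrix.conjTranspose_one, one_mul, mul_one]
    ext i j
    by_cases h : i = j
    · subst h; simp
    · rw [Matrix.diagonal_apply_ne _ h]
      exact hinv i j h (Or.inl (lt_of_lt_of_le i.isLt hk))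
  | succ m ih =>
    intro k hk B hB hinv
    by_cases hκℓ : k < ℓ
    case neg => exact ih k (by omega) B hB hinv
    case pos =>
    set κ : Fin ℓ := ⟨k, hκℓ⟩ with hκdef
    have hκ : (κ : ℕ) = k := rfl
    by_cases hrow : ∀ j, B κ j = 0
    · refine ih (k + 1) (by omega) B hB ?_
      intro i j hij h
      rcases h with h | h <;> rcases Nat.lt_succ_iff_lt_or_eq.mp h with h | h
      · exact hinv i j hij (Or.inl h)
      · have hiκ : i = κ := Fin.ext (by rw [h, hκ])
        rw [hiκ]; exact hrow j
      · exact hinv i j hij (Or.inr h)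
      · have hjκ : j = κ := Fin.ext (by rw [h, hκ])
        rw [hjκ, ← herm_entry hB κ i, hrow i, star_zero]
    · push_neg at hrow
      obtain ⟨j₀, hj₀⟩ := hrow
      -- Stage 1: arrange a nonzero pivot at (κ, κ).
      obtain ⟨Q, hQu, hQinv, hQherm, hQκκ⟩ :
          ∃ Q : Matrix (Fin ℓ) (Fin ℓ) D, IsUnit Q ∧
            (∀ i j : Fin ℓ, i ≠ j → ((i : ℕ) < k ∨ (j : ℕ) < k) → (Qᴴ * B * Q) i j = 0) ∧
            (Qᴴ * B * Q)ᴴ = Qᴴ * B * Q ∧ (Qᴴ * B * Q) κ κ ≠ 0 := by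
        by_cases hBκκ : B κ κ = 0
        · obtain ⟨Q, hQu, hQinv, hQκκ⟩ := stepB h2D B hB κ hκ hinv hBκκ j₀ hj₀
          exact ⟨Q, hQu, hQinv, herm_conj' Q B hB, hQκκ⟩
        · refine ⟨1, isUnit_one, ?_, ?_, ?_⟩ <;>
            rw [Matrix.conjTranspose_one, one_mul, mul_one]
          · exact hinv
          · exact hB
          · exact hBκκ
      -- Stage 2: clear row and column κ.
      obtain ⟨P₀, hP₀u, hP₀inv⟩ :=
        stepA (Qᴴ * B * Q) hQherm κ hκ hQinv hQκκ
      -- Stage 3: induction.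
      obtain ⟨P₁, hP₁u, d, hP₁d⟩ :=
        ih (k + 1) (by omega) (P₀ᴴ * (Qᴴ * B * Q) * P₀)
          (herm_conj' P₀ _ hQherm) hP₀inv
      refine ⟨Q * P₀ * P₁, (hQu.mul hP₀u).mul hP₁u, d, ?_⟩
      rw [conj_conj P₁ (Q * P₀) B, conj_conj P₀ Q B, hP₁d]

private lemma diag_full (h2D : (2 : D) ≠ 0) (B : Matrix (Fin ℓ) (Fin ℓ) D) (hB : Bᴴ = B) :
    ∃ P : Matrix (Fin ℓ) (Fin ℓ) D, IsUnit P ∧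
      ∃ d : Fin ℓ → D, Pᴴ * B * P = Matrix.diagonal d :=
  diag_aux h2D ℓ 0 (by omega) B hB (fun i j _ h => by omega)

private lemma qf_e00 {m : ℕ} (p : D) (X : Fin (m+1) → D) :
    qf (e00 p) X = star (X 0) * p * X 0 := by
  simp [qf, e00, mul_ite, ite_mul, mul_zero, zero_mul, Finset.sum_ite_eq']

private lemma trace_diag_conj (x : D) (B : Matrix (Fin ℓ) (Fin ℓ) D) :
    Matrix.trace ((Matrix.diagonal fun _ : Fin ℓ => x)ᴴ * B * Matrix.diagonal fun _ : Fin ℓ => x)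
      = star x * Matrix.trace B * x := by
  have h1 : ∀ a, ((Matrix.diagonal fun _ : Fin ℓ => x)ᴴ * B
      * Matrix.diagonal fun _ : Fin ℓ => x) a a = star x * B a a * x := by
    intro a
    rw [conj_entry]
    simp [Matrix.diagonal_apply, apply_ite (star : D → D), mul_ite, ite_mul,
      Finset.sum_ite_eq']
  simp only [Matrix.trace, Matrix.diag, h1]
  rw [Finset.mul_sum, Finset.sum_mul]

end Helpers

section MAIN

variable {F D : Type*} [Field F] [DivisionRing D] [Algebra F D] [StarRing D]

private lemma mem_PSD {ℓ : ℕ} {PC : Set D} {B : Matrix (Fin ℓ) (Fin ℓ) D} :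
    B ∈ PSDset ℓ PC ↔ Bᴴ = B ∧ ∀ X, qf B X ∈ PC := Iff.rfl

private lemma two_ne_zero_D (h2 : (2 : F) ≠ 0) : (2 : D) ≠ 0 := by
  intro h
  apply h2
  apply (algebraMap F D).injective
  rw [map_ofNat, map_zero, h]

private lemma alg_inj (u : F) (h : algebraMap F D u = 0) : u = 0 :=
  (algebraMap F D).injective (by rw [h, map_zero])

private lemma ppc_zero {A : Type*} [Ring A] [Algebra F A] [StarRing A] {PC : Set A}
    (h : IsPrepositiveCone F PC) : (0 : A) ∈ PC := by
  obtain ⟨p, hp⟩ := h.2.1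
  simpa using h.2.2.2.1 0 p hp

private lemma ppc_exists_ne {A : Type*} [Ring A] [Algebra F A] [StarRing A] {PC : Set A}
    (h : IsPrepositiveCone F PC) : ∃ p ∈ PC, p ≠ 0 := by
  by_contra hc
  push_neg at hc
  have hS : ∀ u : F, ∀ p ∈ PC, u • p ∈ PC := by
    intro u p hp
    rw [hc p hp, smul_zero]
    exact ppc_zero h
  exact one_ne_zero (h.2.2.2.2.1.2.2.2 1 (hS 1) (hS (-1)))

private lemma conjT_smul {ℓ : ℕ} (hstar : ∀ c : F, star (algebraMap F D c) = algebraMap F D c)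
    (u : F) (B : Matrix (Fin ℓ) (Fin ℓ) D) : (u • B)ᴴ = u • Bᴴ := by
  ext i j
  simp only [Matrix.conjTranspose_apply, Matrix.smul_apply]
  rw [Algebra.smul_def, Algebra.smul_def, StarMul.star_mul, hstar u, Algebra.commutes]

private lemma qf_smul {ℓ : ℕ} (u : F) (B : Matrix (Fin ℓ) (Fin ℓ) D) (X : Fin ℓ → D) :
    qf (u • B) X = u • qf B X := by
  simp [qf, Matrix.smul_apply, mul_smul_comm, smul_mul_assoc, Finset.smul_sum]

private lemma partA (h2 : (2 : F) ≠ 0)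
    (hstar : ∀ c : F, star (algebraMap F D c) = algebraMap F D c) (n : ℕ)
    (PC : Set D) (hPC : IsPrepositiveCone F PC) :
    IsPrepositiveCone F (PSDset (n + 1) PC) ∧ TrSet (PSDset (n + 1) PC) = PC := by
  obtain ⟨hsym, hne, hadd, hconj, hord, hprop⟩ := hPC
  have h0 : (0 : D) ∈ PC := by
    obtain ⟨p, hp⟩ := hne
    simpa using hconj 0 p hp
  have h2D : (2 : D) ≠ 0 := two_ne_zero_D h2
  have hmemE : ∀ p ∈ PC, e00 (m := n) p ∈ PSDset (n + 1) PC := by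
    intro p hp
    refine mem_PSD.mpr ⟨by rw [e00_conjT, hsym p hp], fun X => ?_⟩
    rw [qf_e00]
    exact hconj (X 0) p hp
  have hscale : {u : F | ∀ B ∈ PSDset (n + 1) PC, u • B ∈ PSDset (n + 1) PC}
      = {u : F | ∀ p ∈ PC, u • p ∈ PC} := by
    ext u
    simp only [Set.mem_setOf_eq]
    constructor
    · intro hu p hp
      have h1 := (mem_PSD.mp (hu (e00 p) (hmemE p hp))).2 (Pi.single 0 1)
      rw [qf_single, star_one, one_mul, mul_one, Matrix.smul_apply] at h1
      simpa [e00] using h1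
    · intro hu B hB
      obtain ⟨hB1, hB2⟩ := mem_PSD.mp hB
      refine mem_PSD.mpr ⟨by rw [conjT_smul hstar, hB1], fun X => ?_⟩
      rw [qf_smul]
      exact hu _ (hB2 X)
  constructor
  · refine ⟨?_, ?_, ?_, ?_, ?_, ?_⟩
    · intro B hB
      rw [Matrix.star_eq_conjTranspose]
      exact (mem_PSD.mp hB).1
    · exact ⟨0, mem_PSD.mpr ⟨by simp, fun X => by rw [qf_zero]; exact h0⟩⟩
    · intro A hA B hB
      exact mem_PSD.mpr ⟨by rw [Matrix.conjTranspose_add, (mem_PSD.mp hA).1,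
        (mem_PSD.mp hB).1], fun X => by
          rw [qf_add]
          exact hadd _ ((mem_PSD.mp hA).2 X) _ ((mem_PSD.mp hB).2 X)⟩
    · intro M B hB
      rw [Matrix.star_eq_conjTranspose]
      refine mem_PSD.mpr ⟨herm_conj' M B (mem_PSD.mp hB).1, fun X => ?_⟩
      rw [qf_conj]
      exact (mem_PSD.mp hB).2 (M *ᵥ X)
    · rw [hscale]; exact hord
    · intro B hB hnB
      refine mat_zero_of_qf h2D (mem_PSD.mp hB).1 fun X => ?_
      refine hprop _ ((mem_PSD.mp hB).2 X) ?_
      rw [← qf_neg]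
      exact (mem_PSD.mp hnB).2 X
  · ext d
    constructor
    · rintro ⟨B, hB, rfl⟩
      have ht : Matrix.trace B = ∑ i, qf B (Pi.single i 1) := by
        simp [Matrix.trace, Matrix.diag, qf_single]
      rw [ht]
      exact Finset.sum_induction _ (· ∈ PC) (fun a b ha hb => hadd a ha b hb) h0
        (fun i _ => (mem_PSD.mp hB).2 _)
    · intro hp
      exact ⟨e00 d, hmemE d hp, e00_trace d⟩

private lemma partB (h2 : (2 : F) ≠ 0)
    (hstar : ∀ c : F, star (algebraMap F D c) = algebraMap F D c) (n : ℕ)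
    (QC : Set (Matrix (Fin (n + 1)) (Fin (n + 1)) D)) (hQC : IsPrepositiveCone F QC) :
    IsPrepositiveCone F (TrSet QC) ∧ PSDset (n + 1) (TrSet QC) = QC := by
  have hQC' := hQC
  obtain ⟨qsym, qne, qadd, qconj, qord, qprop⟩ := hQC
  have h2D : (2 : D) ≠ 0 := two_ne_zero_D h2
  have q0 : (0 : Matrix (Fin (n + 1)) (Fin (n + 1)) D) ∈ QC := by
    obtain ⟨p, hp⟩ := qne
    simpa using qconj 0 p hp
  have qsum : ∀ (s : Finset (Fin (n + 1))) (f : Fin (n + 1) → Matrix (Fin (n + 1)) (Fin (n + 1)) D),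
      (∀ i ∈ s, f i ∈ QC) → ∑ i ∈ s, f i ∈ QC := fun s f hf =>
    Finset.sum_induction f (· ∈ QC) (fun a b ha hb => qadd a ha b hb) q0 hf
  have qherm : ∀ B ∈ QC, Bᴴ = B := fun B hB => by
    rw [← Matrix.star_eq_conjTranspose]
    exact qsym B hB
  have key1 : ∀ B ∈ QC, ∀ X, e00 (qf B X) ∈ QC := by
    intro B hB X
    have h := qconj (colM X) B hB
    rwa [Matrix.star_eq_conjTranspose, colM_conj] at h
  have key1' : ∀ B ∈ QC, ∀ X, qf B X ∈ TrSet QC :=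
    fun B hB X => ⟨_, key1 B hB X, e00_trace _⟩
  have key2 : ∀ d ∈ TrSet QC, e00 (m := n) d ∈ QC := by
    rintro d ⟨B, hB, rfl⟩
    have ht : Matrix.trace B = ∑ i, qf B (Pi.single i 1) := by
      simp [Matrix.trace, Matrix.diag, qf_single]
    rw [ht, e00_sum]
    exact qsum _ _ fun i _ => key1 B hB _
  have tprop : ∀ d ∈ TrSet QC, -d ∈ TrSet QC → d = 0 := by
    intro d hd hnd
    have h1 := key2 d hd
    have h2 := key2 _ hnd
    rw [e00_neg] at h2
    exact e00_inj (qprop _ h1 h2)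
  have tadd : ∀ a ∈ TrSet QC, ∀ b ∈ TrSet QC, a + b ∈ TrSet QC := by
    rintro a ⟨A, hA, rfl⟩ b ⟨B, hB, rfl⟩
    exact ⟨A + B, qadd A hA B hB, Matrix.trace_add A B⟩
  have tlift : ∀ u : F, (∀ p ∈ QC, u • p ∈ QC) → ∀ d ∈ TrSet QC, u • d ∈ TrSet QC := by
    rintro u hu d ⟨B, hB, rfl⟩
    exact ⟨u • B, hu B hB, Matrix.trace_smul u B⟩
  have texists : ∃ d ∈ TrSet QC, d ≠ 0 := by
    obtain ⟨B₀, hB₀, hB₀ne⟩ := ppc_exists_ne hQC'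
    have hX : ∃ X, qf B₀ X ≠ 0 := by
      by_contra hc
      push_neg at hc
      exact hB₀ne (mat_zero_of_qf h2D (qherm B₀ hB₀) hc)
    obtain ⟨X, hXne⟩ := hX
    exact ⟨qf B₀ X, key1' B₀ hB₀ X, hXne⟩
  constructor
  · refine ⟨?_, ?_, tadd, ?_, ⟨?_, ?_, ?_, ?_⟩, tprop⟩
    · rintro a ⟨B, hB, rfl⟩
      rw [← Matrix.trace_conjTranspose, qherm B hB]
    · exact ⟨0, 0, q0, by simp⟩
    · intro x p hp
      obtain ⟨B, hB, rfl⟩ := hp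
      have hm := qconj (Matrix.diagonal fun _ : Fin (n + 1) => x) B hB
      rw [Matrix.star_eq_conjTranspose] at hm
      exact ⟨_, hm, trace_diag_conj x B⟩
    · intro x hx y hy d hd
      rw [add_smul]
      exact tadd _ (hx d hd) _ (hy d hd)
    · intro x hx y hy d hd
      rw [mul_smul]
      exact hx _ (hy d hd)
    · intro x
      rcases qord.2.2.1 x with h | h
      · exact Or.inl (tlift x h)
      · exact Or.inr (tlift (-x) h)
    · intro x hx hnx
      obtain ⟨d₀, hd₀, hd₀ne⟩ := texists
      have h1 : x • d₀ ∈ TrSet QC := hx d₀ hd₀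
      have h2 : -(x • d₀) ∈ TrSet QC := by
        rw [← neg_smul]
        exact hnx d₀ hd₀
      have h3 := tprop _ h1 h2
      rw [Algebra.smul_def] at h3
      rcases mul_eq_zero.mp h3 with h | h
      · exact alg_inj x h
      · exact absurd h hd₀ne
  · ext B
    constructor
    · intro hBmem
      obtain ⟨hBh, hBq⟩ := mem_PSD.mp hBmem
      obtain ⟨P, hPu, d, hPd⟩ := diag_full h2D B hBh
      have hd : ∀ i, d i ∈ TrSet QC := by
        intro i
        have h1 := qf_conj P B (Pi.single i 1)
        rw [hPd, qf_single, star_one, one_mul, mul_one, Matrix.diagonal_apply_eq] at h1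
        rw [h1]
        exact hBq _
      have hdiagQ : Matrix.diagonal d ∈ QC := by
        rw [diagonal_eq_sum_eii]
        refine qsum _ _ fun i _ => ?_
        have h1 := key2 _ (hd i)
        have h2 := qconj (sMat i) _ h1
        rw [Matrix.star_eq_conjTranspose, sMat_conj] at h2
        simpa [e00] using h2
      obtain ⟨u, rfl⟩ := hPu
      have h3 := qconj (Units.val u⁻¹) _ hdiagQ
      rw [Matrix.star_eq_conjTranspose, ← hPd] at h3
      have h4 : (Units.val u⁻¹)ᴴ * ((Units.val u)ᴴ * B * Units.val u) * Units.val u⁻¹ = B := by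
        have h5 : Units.val u * Units.val u⁻¹ = 1 := u.mul_inv
        calc (Units.val u⁻¹)ᴴ * ((Units.val u)ᴴ * B * Units.val u) * Units.val u⁻¹
            = (Units.val u * Units.val u⁻¹)ᴴ * B * (Units.val u * Units.val u⁻¹) := by
              rw [Matrix.conjTranspose_mul]
              noncomm_ring
          _ = B := by rw [h5, Matrix.conjTranspose_one, one_mul, mul_one]
      rwa [h4] at h3
    · intro hB
      exact mem_PSD.mpr ⟨qherm B hB, fun X => key1' B hB X⟩

end MAIN

/-- The maps `PC ↦ PSD_ℓ(PC)` and `QC ↦ Tr_ℓ(QC)` are mutually inverse bijections between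
prepositive cones on `(D,ϑ)` and prepositive cones on `(M_ℓ(D), ϑ^t)`, `ℓ = n+1 ≥ 1`. -/
theorem stmt_11 {F D : Type*} [Field F] [DivisionRing D] [Algebra F D] [StarRing D]
    [FiniteDimensional F D] (h2 : (2 : F) ≠ 0)
    (hstar : ∀ c : F, star (algebraMap F D c) = algebraMap F D c)
    (n : ℕ) :
    (∀ PC : Set D, IsPrepositiveCone F PC →
      IsPrepositiveCone F (PSDset (n + 1) PC) ∧ TrSet (PSDset (n + 1) PC) = PC) ∧
    (∀ QC : Set (Matrix (Fin (n + 1)) (Fin (n + 1)) D), IsPrepositiveCone F QC →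
      IsPrepositiveCone F (TrSet QC) ∧ PSDset (n + 1) (TrSet QC) = QC) :=
  ⟨fun PC h => partA h2 hstar n PC h, fun QC h => partB h2 hstar n QC h⟩
end

section
/- Let F be a field of characteristic ≠ 2 with an ordering P. Let S ∈ M_n(F) be a diagonal matrix having at least two nonzero diagonal entries of opposite sign with respect to P, and let ε ∈ {-1,0,1}^n. Then there exists a diagonal matrix S' ∈ M_n(F) that is a sum of matrices of the form u E S E^t with u ∈ P and E ∈ M_n(F), and such that the sign (with respect to P) of the i-th diagonal entry of S' is ε_i for each i. -/
open Matrix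

lemma std_conj {F : Type*} [Field F] {n : ℕ} (s : Fin n → F) (m a : Fin n) :
    Matrix.single m a (1 : F) * Matrix.diagonal s * (Matrix.single m a (1 : F))ᵀ =
      Matrix.single m m (s a) := by
  have h1 : Matrix.single m a (1 : F) * Matrix.diagonal s = Matrix.single m a (s a) := by
    ext p q
    by_cases hp : p = m
    · subst hp
      by_cases hq : q = a
      · subst hq; simp [Matrix.mul_diagonal]
      · simp [Matrix.mul_diagonal, hq, Ne.symm hq]
    · simp [Matrix.mul_diagonal, hp, Ne.symm hp]
  have h2 : (Matrix.single m a (1 : F))ᵀ = Matrix.single a m (1 : F) := by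
    ext p q
    simp [Matrix.transpose_apply, Matrix.single, and_comm]
  rw [h1, h2, Matrix.single_mul_single_same, mul_one]

/-- If `S = diag(s)` has two nonzero diagonal entries of opposite sign w.r.t. `P`, then
for any prescribed signs `ε i ∈ {-1,0,1}` there is a diagonal matrix `S'`, weakly
represented by `⟨S⟩_t` (i.e. a finite sum of matrices `u • (E * S * Eᵀ)` with `u ∈ P`),
whose `i`-th diagonal entry has sign `ε i` for every `i`. -/
theorem stmt_12 {F : Type*} [Field F] (h2 : (2 : F) ≠ 0)
    (P : Set F) (hP : IsOrdering P)
    (n : ℕ) (s : Fin n → F)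
    (hsign : ∃ i j : Fin n, s i ∈ P ∧ s i ≠ 0 ∧ -s j ∈ P ∧ s j ≠ 0)
    (ε : Fin n → ℤ) (hε : ∀ i, ε i = -1 ∨ ε i = 0 ∨ ε i = 1) :
    ∃ (S' : Matrix (Fin n) (Fin n) F) (k : ℕ) (u : Fin k → F)
      (E : Fin k → Matrix (Fin n) (Fin n) F),
      (∀ m, u m ∈ P) ∧
      S' = ∑ m, u m • (E m * Matrix.diagonal s * (E m)ᵀ) ∧
      S'.IsDiag ∧
      ∀ i, (ε i = 1 → S' i i ∈ P ∧ S' i i ≠ 0) ∧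
        (ε i = -1 → -S' i i ∈ P ∧ S' i i ≠ 0) ∧
        (ε i = 0 → S' i i = 0) := by
  obtain ⟨i₀, j₀, hi, hi0, hj, hj0⟩ := hsign
  have h1P : (1 : F) ∈ P := by
    rcases hP.2.2.1 1 with h | h
    · exact h
    · have := hP.2.1 _ h _ h
      simpa using this
  set E : Fin n → Matrix (Fin n) (Fin n) F := fun m =>
    if ε m = 0 then 0 else if ε m = 1 then Matrix.single m i₀ 1 else Matrix.single m j₀ 1
    with hE
  set d : Fin n → F := fun m => if ε m = 0 then 0 else if ε m = 1 then s i₀ else s j₀ with hd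
  have key : ∀ m, (1 : F) • (E m * Matrix.diagonal s * (E m)ᵀ) = Matrix.single m m (d m) := by
    intro m
    rw [one_smul, hE, hd]
    by_cases h0 : ε m = 0
    · simp [h0, Matrix.single_zero]
    · by_cases h1 : ε m = 1 <;> simp [h0, h1, std_conj]
  refine ⟨Matrix.diagonal d, n, fun _ => 1, E, fun _ => h1P, ?_, Matrix.isDiag_diagonal d, ?_⟩
  · ext p q
    rw [Matrix.sum_apply]
    simp only [key]
    by_cases hpq : p = q
    · subst hpq
      rw [Finset.sum_eq_single p (fun b _ hb => by simp [hb]) (by simp)]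
      simp
    · rw [Finset.sum_eq_zero (fun b _ => ?_)]
      · simp [Matrix.diagonal_apply_ne _ hpq]
      · by_cases hb : b = p
        · subst hb; simp [hpq]
        · simp [hb]
  · intro i
    refine ⟨fun h => ?_, fun h => ?_, fun h => ?_⟩
    · have : ε i ≠ 0 := by omega
      simp only [Matrix.diagonal_apply_eq, hd, this, h, if_false, if_true]
      exact ⟨hi, hi0⟩
    · have h0 : ε i ≠ 0 := by omega
      have h1 : ε i ≠ 1 := by omega
      simp only [Matrix.diagonal_apply_eq, hd, h0, h1, if_false]
      exact ⟨hj, hj0⟩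
    · simp [hd, h]
end

section
/- Let F be a field of characteristic ≠ 2 and P an ordering of F. The only two prepositive cones on (M_n(F), t) over P are the set of symmetric matrices positive semidefinite with respect to P and the set of symmetric matrices negative semidefinite with respect to P. -/
open Matrix

/-- A prepositive cone on `(M_n(F), t)` (transpose involution) over an ordering `P`:
a set of symmetric matrices, nonempty, closed under addition and under
`M ↦ Xᵀ M X`, whose set of preserving scalars is exactly `P`, and proper. -/
def IsMatPrepositiveConeOver {F : Type*} [Field F] {n : ℕ} (P : Set F)
    (PC : Set (Matrix (Fin n) (Fin n) F)) : Prop :=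
  (∀ M ∈ PC, Mᵀ = M) ∧ PC.Nonempty ∧ (∀ a ∈ PC, ∀ b ∈ PC, a + b ∈ PC) ∧
  (∀ X : Matrix (Fin n) (Fin n) F, ∀ M ∈ PC, Xᵀ * M * X ∈ PC) ∧
  {u : F | ∀ M ∈ PC, u • M ∈ PC} = P ∧
  (∀ M ∈ PC, -M ∈ PC → M = 0)

namespace MatConeAux

variable {F : Type*} [Field F] {n : ℕ}

/-! ### Ordering facts -/

lemma ord_zero_mem {P : Set F} (hP : IsOrdering P) : (0 : F) ∈ P := by
  rcases hP.2.2.1 0 with h | h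
  · exact h
  · simpa using h

lemma ord_sq_mem {P : Set F} (hP : IsOrdering P) (a : F) : a * a ∈ P := by
  rcases hP.2.2.1 a with h | h
  · exact hP.2.1 a h a h
  · have := hP.2.1 _ h _ h
    simpa using this

lemma ord_one_mem {P : Set F} (hP : IsOrdering P) : (1 : F) ∈ P := by
  simpa using ord_sq_mem hP 1

lemma ord_inv_mem {P : Set F} (hP : IsOrdering P) {a : F} (ha : a ∈ P) : a⁻¹ ∈ P := by
  rcases eq_or_ne a 0 with rfl | h
  · simpa using ord_zero_mem hP
  · have he : a⁻¹ = a * (a⁻¹ * a⁻¹) := by field_simp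
    rw [he]
    exact hP.2.1 _ ha _ (ord_sq_mem hP _)

lemma ord_neg_one_not_mem {P : Set F} (hP : IsOrdering P) : (-1 : F) ∉ P := by
  intro h
  have := hP.2.2.2 1 (ord_one_mem hP) h
  simp at this

lemma ord_sum_mem {P : Set F} (hP : IsOrdering P) {ι : Type*} (s : Finset ι) (f : ι → F)
    (hf : ∀ i ∈ s, f i ∈ P) : ∑ i ∈ s, f i ∈ P := by
  classical
  induction s using Finset.induction_on with
  | empty => simpa using ord_zero_mem hP
  | @insert a s hx ih =>
    rw [Finset.sum_insert hx]
    exact hP.1 _ (hf a (by simp)) _ (ih fun i hi => hf i (by simp [hi]))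

/-! ### Quadratic form facts -/

lemma qf_eq_bilin (M : Matrix (Fin n) (Fin n) F) (x : Fin n → F) :
    ∑ i, ∑ j, x i * M i j * x j = Matrix.toBilin' M x x := (Matrix.toBilin'_apply M x x).symm

lemma qf_neg (M : Matrix (Fin n) (Fin n) F) (x : Fin n → F) :
    ∑ i, ∑ j, x i * (-M) i j * x j = -∑ i, ∑ j, x i * M i j * x j := by
  simp [Matrix.neg_apply, mul_neg, neg_mul, Finset.sum_neg_distrib]

lemma qf_add (M N : Matrix (Fin n) (Fin n) F) (x : Fin n → F) :
    ∑ i, ∑ j, x i * (M + N) i j * x j =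
      (∑ i, ∑ j, x i * M i j * x j) + ∑ i, ∑ j, x i * N i j * x j := by
  simp [Matrix.add_apply, mul_add, add_mul, Finset.sum_add_distrib]

lemma qf_smul (u : F) (M : Matrix (Fin n) (Fin n) F) (x : Fin n → F) :
    ∑ i, ∑ j, x i * (u • M) i j * x j = u * ∑ i, ∑ j, x i * M i j * x j := by
  simp only [Matrix.smul_apply, smul_eq_mul, Finset.mul_sum]
  exact Finset.sum_congr rfl fun i _ => Finset.sum_congr rfl fun j _ => by ring

lemma bilin_congr (X M : Matrix (Fin n) (Fin n) F) (x y : Fin n → F) :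
    Matrix.toBilin' (Xᵀ * M * X) x y = Matrix.toBilin' M (X *ᵥ x) (X *ᵥ y) := by
  rw [Matrix.toBilin'_apply', Matrix.toBilin'_apply', ← Matrix.mulVec_mulVec,
    ← Matrix.mulVec_mulVec, Matrix.dotProduct_mulVec x, Matrix.vecMul_transpose]

lemma bilin_symm {M : Matrix (Fin n) (Fin n) F} (hs : Mᵀ = M) (x y : Fin n → F) :
    Matrix.toBilin' M x y = Matrix.toBilin' M y x := by
  have hsm : ∀ i j, M j i = M i j := fun i j => congrFun (congrFun hs i) j
  rw [Matrix.toBilin'_apply, Matrix.toBilin'_apply]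
  rw [Finset.sum_comm]
  refine Finset.sum_congr rfl fun i _ => Finset.sum_congr rfl fun j _ => ?_
  rw [hsm j i]; ring

/-- A symmetric matrix with identically vanishing quadratic form is zero (char ≠ 2). -/
lemma eq_zero_of_qf_zero (h2 : (2 : F) ≠ 0) {M : Matrix (Fin n) (Fin n) F} (hs : Mᵀ = M)
    (h : ∀ x, Matrix.toBilin' M x x = 0) : M = 0 := by
  have hd : ∀ k, M k k = 0 := fun k => by
    simpa using h (Pi.single k 1)
  ext i j
  have hij := h (Pi.single i 1 + Pi.single j 1)
  simp only [map_add, LinearMap.add_apply, Matrix.toBilin'_single, hd] at hij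
  have hsm : M i j = M j i := congrFun (congrFun hs j) i
  have h2m : 2 * M i j = 0 := by linear_combination hij + hsm
  rcases mul_eq_zero.1 h2m with h' | h'
  · exact absurd h' h2
  · simpa using h'

/-! ### Cone basics -/

variable {P : Set F} {PC : Set (Matrix (Fin n) (Fin n) F)}

lemma cone_zero_mem (hc : IsMatPrepositiveConeOver P PC) :
    (0 : Matrix (Fin n) (Fin n) F) ∈ PC := by
  obtain ⟨M, hM⟩ := hc.2.1
  have := hc.2.2.2.1 0 M hM
  simpa using this

lemma cone_sum_mem (hc : IsMatPrepositiveConeOver P PC) {ι : Type*} (s : Finset ι)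
    (f : ι → Matrix (Fin n) (Fin n) F) (hf : ∀ i ∈ s, f i ∈ PC) : ∑ i ∈ s, f i ∈ PC := by
  classical
  induction s using Finset.induction_on with
  | empty => simpa using cone_zero_mem hc
  | @insert a s hx ih =>
    rw [Finset.sum_insert hx]
    exact hc.2.2.1 _ (hf a (by simp)) _ (ih fun i hi => hf i (by simp [hi]))

lemma cone_smul_mem (hc : IsMatPrepositiveConeOver P PC) {u : F} (hu : u ∈ P)
    {M : Matrix (Fin n) (Fin n) F} (hM : M ∈ PC) : u • M ∈ PC := by
  have : u ∈ {u : F | ∀ M ∈ PC, u • M ∈ PC} := by rw [hc.2.2.2.2.1]; exact hu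
  exact this M hM

/-- Extraction: from `M ∈ PC` and a vector `x`, the matrix with `xᵀ M x` in position
`(k,k)` and zeros elsewhere is in `PC`. -/
lemma cone_extract (hc : IsMatPrepositiveConeOver P PC) {M : Matrix (Fin n) (Fin n) F}
    (hM : M ∈ PC) (x : Fin n → F) (k : Fin n) :
    Matrix.single k k (Matrix.toBilin' M x x) ∈ PC := by
  classical
  set X : Matrix (Fin n) (Fin n) F := Matrix.of fun i j => if j = k then x i else 0 with hXdef
  have key : Xᵀ * M * X = Matrix.single k k (Matrix.toBilin' M x x) := by
    ext a b
    have hentry : (Xᵀ * M * X) a b = ∑ c, ∑ d, X c a * M c d * X d b := by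
      simp only [Matrix.mul_apply, Matrix.transpose_apply, Finset.sum_mul]
      rw [Finset.sum_comm]
    rw [hentry, Matrix.toBilin'_apply]
    by_cases ha : a = k
    · by_cases hb : b = k
      · subst ha; subst hb
        simp [Matrix.single, hXdef]
      · simp [Matrix.single, hXdef, hb, Ne.symm hb]
    · simp [Matrix.single, hXdef, ha, Ne.symm ha]
  have := hc.2.2.2.1 X M hM
  rwa [key] at this

/-- The negation of a prepositive cone is a prepositive cone. -/
lemma cone_neg (hc : IsMatPrepositiveConeOver P PC) :
    IsMatPrepositiveConeOver P {M | -M ∈ PC} := by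
  have h0 := cone_zero_mem hc
  obtain ⟨hsym, _, hadd, hcong, hscal, hprop⟩ := hc
  refine ⟨?_, ⟨0, by simpa using h0⟩, ?_, ?_, ?_, ?_⟩
  · intro M hM
    have := hsym (-M) hM
    rw [Matrix.transpose_neg] at this
    exact neg_injective this
  · intro a ha b hb
    have := hadd _ ha _ hb
    show -(a + b) ∈ PC
    rw [neg_add]
    exact this
  · intro X M hM
    have := hcong X (-M) hM
    show -(Xᵀ * M * X) ∈ PC
    simpa [Matrix.mul_neg, Matrix.neg_mul] using this
  · rw [← hscal]
    ext u
    constructor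
    · intro hu N hN
      have := hu (-N) (by simpa using hN)
      simpa using this
    · intro hu N hN
      have := hu (-N) hN
      simpa using this
  · intro M hM hM'
    have := hprop (-M) hM (by simpa using hM')
    simpa using this

/-! ### The PSD set is a prepositive cone -/

lemma psd_cone (h2 : (2 : F) ≠ 0) {P : Set F} (hP : IsOrdering P) (hn : 0 < n) :
    IsMatPrepositiveConeOver P
      {M : Matrix (Fin n) (Fin n) F | Mᵀ = M ∧
        ∀ x : Fin n → F, (∑ i, ∑ j, x i * M i j * x j) ∈ P} := by
  have hone : (1 : Matrix (Fin n) (Fin n) F) ∈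
      {M : Matrix (Fin n) (Fin n) F | Mᵀ = M ∧
        ∀ x : Fin n → F, (∑ i, ∑ j, x i * M i j * x j) ∈ P} := by
    refine ⟨Matrix.transpose_one, fun x => ?_⟩
    rw [qf_eq_bilin, Matrix.toBilin'_apply', Matrix.one_mulVec]
    exact ord_sum_mem hP _ _ fun i _ => ord_sq_mem hP (x i)
  refine ⟨fun M hM => hM.1, ⟨0, by simp [ord_zero_mem hP]⟩, ?_, ?_, ?_, ?_⟩
  · rintro a ⟨ha1, ha2⟩ b ⟨hb1, hb2⟩
    refine ⟨by rw [Matrix.transpose_add, ha1, hb1], fun x => ?_⟩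
    rw [qf_add]
    exact hP.1 _ (ha2 x) _ (hb2 x)
  · rintro X M ⟨h1, hq⟩
    refine ⟨by rw [Matrix.transpose_mul, Matrix.transpose_mul, Matrix.transpose_transpose, h1,
      Matrix.mul_assoc], fun x => ?_⟩
    rw [qf_eq_bilin, bilin_congr, ← qf_eq_bilin]
    exact hq _
  · ext u
    constructor
    · intro hu
      have := hu 1 hone
      have hq := this.2 (Pi.single ⟨0, hn⟩ 1)
      rw [qf_smul, qf_eq_bilin, Matrix.toBilin'_apply', Matrix.one_mulVec] at hq
      simpa [dotProduct, Pi.single_apply] using hq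
    · intro hu M hM
      refine ⟨by rw [Matrix.transpose_smul, hM.1], fun x => ?_⟩
      rw [qf_smul]
      exact hP.2.1 _ hu _ (hM.2 x)
  · rintro M ⟨h1, hq⟩ ⟨h1', hq'⟩
    refine eq_zero_of_qf_zero h2 h1 fun x => ?_
    have hx := hq x
    have hx' := hq' x
    rw [qf_neg] at hx'
    have h0 := hP.2.2.2 _ hx hx'
    rw [qf_eq_bilin] at h0
    exact h0

/-! ### A prepositive cone containing `E_{00}` is the PSD set -/

lemma cone_eq_psd (h2 : (2 : F) ≠ 0) {P : Set F} (hP : IsOrdering P) (hn : 0 < n)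
    {PC : Set (Matrix (Fin n) (Fin n) F)} (hc : IsMatPrepositiveConeOver P PC)
    (h1 : Matrix.single (⟨0, hn⟩ : Fin n) ⟨0, hn⟩ (1 : F) ∈ PC) :
    PC = {M : Matrix (Fin n) (Fin n) F | Mᵀ = M ∧
      ∀ x : Fin n → F, (∑ i, ∑ j, x i * M i j * x j) ∈ P} := by
  classical
  set z : Fin n := ⟨0, hn⟩ with hz
  -- membership of scalars: if `std z z c ∈ PC` then `c ∈ P`
  have hD : ∀ c : F, Matrix.single z z c ∈ PC → c ∈ P := by
    intro c hcmem
    by_contra hcP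
    rcases hP.2.2.1 c with h | h
    · exact hcP h
    · have hc0 : c ≠ 0 := by
        rintro rfl
        exact hcP (ord_zero_mem hP)
      have hu : (-c)⁻¹ ∈ P := ord_inv_mem hP h
      have hmem2 := cone_smul_mem hc hu hcmem
      rw [Matrix.smul_single] at hmem2
      have hval : (-c)⁻¹ • c = (-1 : F) := by
        rw [smul_eq_mul]
        field_simp
      rw [hval] at hmem2
      have hstdneg : Matrix.single z z (-1 : F) =
          -Matrix.single z z (1 : F) := by
        ext a b
        simp only [Matrix.single, Matrix.of_apply, Matrix.neg_apply]
        split <;> simp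
      rw [hstdneg] at hmem2
      have hzero := hc.2.2.2.2.2 _ h1 hmem2
      have hone0 := congrArg (fun N => N z z) hzero
      simp at hone0
  refine Set.Subset.antisymm ?_ ?_
  -- PC ⊆ PSD
  · intro M hM
    refine ⟨hc.1 M hM, fun x => ?_⟩
    rw [qf_eq_bilin]
    exact hD _ (cone_extract hc hM x z)
  -- PSD ⊆ PC
  · rintro M ⟨hsM, hqM⟩
    haveI : Invertible (2 : F) := invertibleOfNonzero h2
    have hBsym : (Matrix.toBilin' M).IsSymm := ⟨fun x y => by
      simpa using bilin_symm hsM x y⟩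
    obtain ⟨v0, hv0⟩ := LinearMap.BilinForm.exists_orthogonal_basis (LinearMap.BilinForm.isSymm_iff.1 hBsym)
    have hrank : Module.finrank F (Fin n → F) = n := by
      rw [Module.finrank_pi, Fintype.card_fin]
    let v : Module.Basis (Fin n) F (Fin n → F) := v0.reindex (finCongr hrank)
    have hv : ∀ i j : Fin n, i ≠ j → Matrix.toBilin' M (v i) (v j) = 0 := by
      intro i j hij
      have hne : (finCongr hrank).symm i ≠ (finCongr hrank).symm j := fun h =>
        hij (by simpa using congrArg (finCongr hrank) h)
      have := hv0 hne
      simpa [v, Module.Basis.reindex_apply] using this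
    set X : Matrix (Fin n) (Fin n) F := (Pi.basisFun F (Fin n)).toMatrix v with hX
    haveI hXinv : Invertible X := (Pi.basisFun F (Fin n)).invertibleToMatrix v
    have hXapp : ∀ a i, X a i = v i a := fun a i => by
      rw [hX, Module.Basis.toMatrix_apply, Pi.basisFun_repr]
    have hNentry : ∀ i j, (Xᵀ * M * X) i j = Matrix.toBilin' M (v i) (v j) := by
      intro i j
      rw [Matrix.toBilin'_apply]
      simp only [Matrix.mul_apply, Matrix.transpose_apply, Finset.sum_mul]
      rw [Finset.sum_comm]
      exact Finset.sum_congr rfl fun c _ => Finset.sum_congr rfl fun d _ => by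
        rw [hXapp, hXapp]
    have hdiagP : ∀ i, (Xᵀ * M * X) i i ∈ P := by
      intro i
      have hm := hqM (v i)
      rw [qf_eq_bilin] at hm
      rw [hNentry]
      exact hm
    have hstd : ∀ i, Matrix.single i i ((Xᵀ * M * X) i i) ∈ PC := by
      intro i
      have h1' : Matrix.single z z ((Xᵀ * M * X) i i) ∈ PC := by
        have := cone_smul_mem hc (hdiagP i) h1
        rwa [Matrix.smul_single, smul_eq_mul, mul_one] at this
      have hext := cone_extract hc h1' (Pi.single z 1) i
      rwa [show Matrix.toBilin' (Matrix.single z z ((Xᵀ * M * X) i i))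
          (Pi.single z 1) (Pi.single z 1) = (Xᵀ * M * X) i i from by
        rw [Matrix.toBilin'_single]
        exact Matrix.single_apply_same z z _] at hext
    have hNdiag : Xᵀ * M * X = ∑ i, Matrix.single i i ((Xᵀ * M * X) i i) := by
      ext a b
      rw [Matrix.sum_apply]
      by_cases hab : a = b
      · subst hab
        rw [Finset.sum_eq_single a]
        · exact (Matrix.single_apply_same a a _).symm
        · intro i _ hia
          simp [Matrix.single, hia]
        · simp
      · have h0 : (Xᵀ * M * X) a b = 0 := by
          rw [hNentry]
          exact hv a b hab
        rw [h0]
        symm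
        apply Finset.sum_eq_zero
        intro i _
        rcases eq_or_ne i a with rfl | hia
        · simp [Matrix.single, hab]
        · simp [Matrix.single, hia]
    have hNPC : Xᵀ * M * X ∈ PC := by
      rw [hNdiag]
      exact cone_sum_mem hc _ _ fun i _ => hstd i
    have hM' := hc.2.2.2.1 (⅟X) _ hNPC
    have hMeq : (⅟X)ᵀ * (Xᵀ * M * X) * ⅟X = M := by
      have e1 : (⅟X)ᵀ * Xᵀ = 1 := by
        rw [← Matrix.transpose_mul, mul_invOf_self, Matrix.transpose_one]
      calc (⅟X)ᵀ * (Xᵀ * M * X) * ⅟X = ((⅟X)ᵀ * Xᵀ) * M * (X * ⅟X) := by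
            simp only [Matrix.mul_assoc]
        _ = M := by rw [e1, mul_invOf_self, Matrix.one_mul, Matrix.mul_one]
    rwa [hMeq] at hM'

/-- Negation of the PSD set is the NSD set. -/
lemma neg_psd_eq (P : Set F) :
    {M : Matrix (Fin n) (Fin n) F |
        -M ∈ {N : Matrix (Fin n) (Fin n) F | Nᵀ = N ∧
          ∀ x : Fin n → F, (∑ i, ∑ j, x i * N i j * x j) ∈ P}}
      = {M : Matrix (Fin n) (Fin n) F | Mᵀ = M ∧
          ∀ x : Fin n → F, -(∑ i, ∑ j, x i * M i j * x j) ∈ P} := by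
  ext M
  constructor
  · rintro ⟨h1, hq⟩
    rw [Matrix.transpose_neg] at h1
    refine ⟨neg_injective h1, fun x => ?_⟩
    have := hq x
    rwa [qf_neg] at this
  · rintro ⟨h1, hq⟩
    refine ⟨by rw [Matrix.transpose_neg, h1], fun x => ?_⟩
    rw [qf_neg]
    exact hq x

end MatConeAux

open MatConeAux

/-- The only two prepositive cones on `(M_n(F), t)` over `P` are the sets of symmetric
matrices that are positive semidefinite, resp. negative semidefinite, with respect
to `P`. -/
theorem stmt_13 {F : Type*} [Field F] (h2 : (2 : F) ≠ 0)
    (P : Set F) (hP : IsOrdering P) (n : ℕ) (hn : 0 < n)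
    (PC : Set (Matrix (Fin n) (Fin n) F)) :
    IsMatPrepositiveConeOver P PC ↔
      (PC = {M | Mᵀ = M ∧ ∀ x : Fin n → F, (∑ i, ∑ j, x i * M i j * x j) ∈ P} ∨
       PC = {M | Mᵀ = M ∧ ∀ x : Fin n → F, -(∑ i, ∑ j, x i * M i j * x j) ∈ P}) := by
  classical
  constructor
  · intro hc
    set z : Fin n := ⟨0, hn⟩ with hzdef
    -- PC contains a nonzero matrix
    have hex : ∃ M ∈ PC, M ≠ 0 := by
      by_contra h
      push_neg at h
      have hPuniv : ∀ u : F, u ∈ P := by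
        intro u
        rw [← hc.2.2.2.2.1]
        intro M hM
        rw [h M hM]
        simpa using cone_zero_mem hc
      exact ord_neg_one_not_mem hP (hPuniv (-1))
    obtain ⟨M0, hM0, hM0ne⟩ := hex
    have hs0 := hc.1 M0 hM0
    have hxex : ¬∀ x, Matrix.toBilin' M0 x x = 0 := fun h =>
      hM0ne (eq_zero_of_qf_zero h2 hs0 h)
    push_neg at hxex
    obtain ⟨x, hx⟩ := hxex
    have hcmem : Matrix.single z z (Matrix.toBilin' M0 x x) ∈ PC :=
      cone_extract hc hM0 x z
    set c := Matrix.toBilin' M0 x x with hcdef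
    rcases hP.2.2.1 c with hcP | hcP
    · -- `c ∈ P`: `PC` is the PSD cone
      left
      have hinv : c⁻¹ ∈ P := ord_inv_mem hP hcP
      have h1 : Matrix.single z z (1 : F) ∈ PC := by
        have := cone_smul_mem hc hinv hcmem
        rwa [Matrix.smul_single, smul_eq_mul, inv_mul_cancel₀ hx] at this
      exact cone_eq_psd h2 hP hn hc h1
    · -- `-c ∈ P`: `PC` is the NSD cone
      right
      have hinv : (-c)⁻¹ ∈ P := ord_inv_mem hP hcP
      have hneg1 : Matrix.single z z (-1 : F) ∈ PC := by
        have := cone_smul_mem hc hinv hcmem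
        rwa [Matrix.smul_single, smul_eq_mul,
          show (-c)⁻¹ * c = -1 by field_simp] at this
      have hcneg := cone_neg hc
      have h1 : Matrix.single z z (1 : F) ∈ {M | -M ∈ PC} := by
        show -Matrix.single z z (1 : F) ∈ PC
        rwa [show -Matrix.single z z (1 : F) =
            Matrix.single z z (-1 : F) from by
          ext a b
          simp only [Matrix.single, Matrix.of_apply, Matrix.neg_apply]
          split <;> simp]
      have hpsd := cone_eq_psd h2 hP hn hcneg h1
      have hPCeq : PC = {M | -M ∈ {N | -N ∈ PC}} := by
        ext M
        simp
      rw [hPCeq, hpsd, neg_psd_eq]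
  · rintro (rfl | rfl)
    · exact psd_cone h2 hP hn
    · have := cone_neg (psd_cone h2 hP hn)
      rwa [neg_psd_eq] at this
end

section
/- Let F be a field of characteristic ≠ 2 and P an ordering of F. Let 𝒫 be a prepositive cone on (M_ℓ(F), t) over P, where t is the transpose involution. Then there exists ε ∈ {-1,1} such that every matrix C ∈ 𝒫 is congruent to a diagonal matrix whose entries all lie in εP; in other words, 𝒫 consists entirely of positive semidefinite matrices or entirely of negative semidefinite matrices with respect to P. -/
open Matrix

/-- Any symmetric matrix over a field of characteristic `≠ 2` is congruent
to a diagonal matrix. -/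
lemma aux_cong_diag {F : Type*} [Field F] (h2 : (2 : F) ≠ 0) {n : ℕ}
    (M : Matrix (Fin n) (Fin n) F) (hM : Mᵀ = M) :
    ∃ G : Matrix (Fin n) (Fin n) F, IsUnit G ∧ (Gᵀ * M * G).IsDiag := by
  haveI : Invertible (2 : F) := invertibleOfNonzero h2
  have hBsymm : (Matrix.toBilin' M).IsSymm := by
    refine ⟨fun x y => ?_⟩
    simp only [Matrix.toBilin'_apply, RingHom.id_apply]
    rw [Finset.sum_comm]
    refine Finset.sum_congr rfl fun i _ => Finset.sum_congr rfl fun j _ => ?_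
    have : M j i = M i j := by conv_rhs => rw [← hM]; rw [Matrix.transpose_apply]
    rw [this]; ring
  obtain ⟨v0, hv0⟩ := LinearMap.BilinForm.exists_orthogonal_basis (LinearMap.BilinForm.isSymm_iff.mp hBsymm)
  have hrank : Module.finrank F (Fin n → F) = n := Module.finrank_fin_fun F
  let v : Module.Basis (Fin n) F (Fin n → F) := v0.reindex (finCongr hrank)
  have hv : ∀ i j : Fin n, i ≠ j → Matrix.toBilin' M (v i) (v j) = 0 := by
    intro i j hij
    simp only [v, Module.Basis.reindex_apply]
    exact hv0 (fun h => hij (((finCongr hrank).symm.injective h)))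
  let G : Matrix (Fin n) (Fin n) F := (Pi.basisFun F (Fin n)).toMatrix v
  haveI := Module.Basis.invertibleToMatrix (Pi.basisFun F (Fin n)) v
  refine ⟨G, isUnit_of_invertible G, ?_⟩
  intro i j hij
  have key : (Gᵀ * M * G) i j = Matrix.toBilin' M (v i) (v j) := by
    simp only [Matrix.toBilin'_apply, Matrix.mul_apply, Matrix.transpose_apply,
      Finset.sum_mul, G, Module.Basis.toMatrix_apply, Pi.basisFun_repr]
    rw [Finset.sum_comm]
  rw [key, hv i j hij]

/-- Compressing a matrix to the scalar multiple of a standard basis matrix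
by a single diagonal entry. -/
lemma aux_compress {F : Type*} [Field F] {n : ℕ} (D : Matrix (Fin n) (Fin n) F) (i k : Fin n) :
    (single i k (1:F))ᵀ * D * single i k 1 = D i i • single k k 1 := by
  ext a b
  simp only [Matrix.mul_apply, Matrix.single, Matrix.transpose_apply, Matrix.smul_apply,
    Matrix.of_apply, ite_and, smul_eq_mul]
  by_cases h1 : k = a <;> by_cases h2 : k = b <;> simp [h1, h2, mul_comm]

/-- Every prepositive cone on `(M_ℓ(F), t)` over `P` consists entirely of matrices
congruent to diagonal matrices with all entries in `εP` for a single sign `ε ∈ {1, -1}`;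
i.e. it consists entirely of positive semidefinite or entirely of negative semidefinite
matrices with respect to `P`. -/
theorem stmt_14 {F : Type*} [Field F] (h2 : (2 : F) ≠ 0)
    (P : Set F) (hP : IsOrdering P) (n : ℕ)
    (PC : Set (Matrix (Fin n) (Fin n) F)) (hPC : IsMatPrepositiveConeOver P PC) :
    ∃ ε : F, (ε = 1 ∨ ε = -1) ∧
      ∀ C ∈ PC, ∃ G : Matrix (Fin n) (Fin n) F, IsUnit G ∧
        (Gᵀ * C * G).IsDiag ∧ ∀ i, ε * (Gᵀ * C * G) i i ∈ P := by
  obtain ⟨haddP, hmulP, htot, hproperP⟩ := hP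
  obtain ⟨hsym, hne, hadd, hcong, hscal, hprop⟩ := hPC
  have hscalP : ∀ u ∈ P, ∀ M ∈ PC, u • M ∈ PC := by
    intro u hu
    rw [← hscal] at hu
    exact hu
  have h0P : (0 : F) ∈ P := by
    rcases htot 0 with h | h
    · exact h
    · simpa using h
  rcases Nat.eq_zero_or_pos n with hn | hn
  · subst hn
    exact ⟨1, Or.inl rfl, fun C hC => ⟨1, isUnit_one,
      fun i j h => i.elim0, fun i => i.elim0⟩⟩
  · set i0 : Fin n := ⟨0, hn⟩ with hi0
    set E : Matrix (Fin n) (Fin n) F := single i0 i0 (1 : F) with hE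
    -- coherence of signs among diagonal compressions
    have keyA : ∀ a b : F, a • E ∈ PC → b • E ∈ PC → a ∈ P → -b ∈ P → a * b = 0 := by
      intro a b ha hb haP hbP
      have h1 : (a * b) • E ∈ PC := by
        have := hscalP a haP _ hb
        rwa [smul_smul] at this
      have h2 : -((a * b) • E) ∈ PC := by
        have := hscalP (-b) hbP _ ha
        rwa [smul_smul, show -b * a = -(a * b) by ring, neg_smul] at this
      have h3 := hprop _ h1 h2
      have h4 := congrFun (congrFun h3 i0) i0
      simpa [hE, Matrix.smul_apply] using h4
    -- every diagonal entry of a diagonalization of an element of PC compresses into PC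
    have keyB : ∀ D ∈ PC, ∀ i : Fin n, (D i i) • E ∈ PC := by
      intro D hD i
      have := hcong (single i i0 1) D hD
      rwa [aux_compress D i i0] at this
    by_cases hpos : ∀ d : F, d • E ∈ PC → d ∈ P
    · refine ⟨1, Or.inl rfl, fun C hC => ?_⟩
      obtain ⟨G, hG, hdiag⟩ := aux_cong_diag h2 C (hsym C hC)
      refine ⟨G, hG, hdiag, fun i => ?_⟩
      rw [one_mul]
      exact hpos _ (keyB _ (hcong G C hC) i)
    · push_neg at hpos
      obtain ⟨d0, hd0, hd0P⟩ := hpos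
      have hd0neg : -d0 ∈ P := (htot d0).resolve_left hd0P
      have hd0ne : d0 ≠ 0 := by
        intro h
        exact hd0P (h ▸ h0P)
      have hall : ∀ d : F, d • E ∈ PC → -d ∈ P := by
        intro d hd
        by_contra hdn
        have hdP : d ∈ P := (htot d).resolve_right hdn
        have := keyA d d0 hd hd0 hdP hd0neg
        rcases mul_eq_zero.1 this with h | h
        · exact hdn (h ▸ (by simpa using h0P))
        · exact hd0ne h
      refine ⟨-1, Or.inr rfl, fun C hC => ?_⟩
      obtain ⟨G, hG, hdiag⟩ := aux_cong_diag h2 C (hsym C hC)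
      refine ⟨G, hG, hdiag, fun i => ?_⟩
      rw [neg_one_mul]
      exact hall _ (keyB _ (hcong G C hC) i)
end

section
/- Let E be a finite-dimensional F-division algebra with involution τ, and let L be a subfield of Sym(E,τ) containing F and maximal for inclusion among such subfields. Then either L is a maximal subfield of E, or there exists u ∈ Skew(E,τ), u ≠ 0, with u² ∈ L such that L(u) is a maximal subfield of E. -/
/-- A maximal subfield of a division algebra `E`, modelled as a subalgebra that is
commutative and maximal among commutative subalgebras. -/
def IsMaximalSubfield {F E : Type*} [Field F] [DivisionRing E] [Algebra F E]
    (K : Subalgebra F E) : Prop :=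
  (∀ x ∈ K, ∀ y ∈ K, x * y = y * x) ∧
  ∀ K' : Subalgebra F E, (∀ x ∈ K', ∀ y ∈ K', x * y = y * x) → K ≤ K' → K' = K

section Aux

variable {F E : Type*} [Field F] [DivisionRing E] [Algebra F E]

/-- If the generators pairwise commute, the adjoined subalgebra is commutative. -/
lemma aux_adjoin_comm {S : Set E} (h : ∀ a ∈ S, ∀ b ∈ S, a * b = b * a) :
    ∀ x ∈ Algebra.adjoin F S, ∀ y ∈ Algebra.adjoin F S, x * y = y * x := by
  have key : ∀ x ∈ Algebra.adjoin F S, ∀ a ∈ S, a * x = x * a := by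
    intro x hx
    induction hx using Algebra.adjoin_induction with
    | mem z hz => intro a ha; exact h a ha z hz
    | algebraMap r => intro a ha; exact (Algebra.commutes r a).symm
    | add x y hx hy ihx ihy =>
        intro a ha; rw [mul_add, add_mul, ihx a ha, ihy a ha]
    | mul x y hx hy ihx ihy =>
        intro a ha
        rw [← mul_assoc, ihx a ha, mul_assoc, ihy a ha, mul_assoc]
  intro x hx y hy
  induction hy using Algebra.adjoin_induction with
  | mem z hz => exact (key x hx z hz).symm
  | algebraMap r => exact Algebra.commutes r x |>.symm ▸ (Algebra.commutes r x).symm ▸ rfl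
  | add y z hy hz ihy ihz => rw [mul_add, add_mul, ihy, ihz]
  | mul y z hy hz ihy ihz => rw [← mul_assoc, ihy, mul_assoc, ihz, ← mul_assoc]

/-- In a finite-dimensional division algebra, every subalgebra is closed under inverses. -/
lemma aux_inv_mem [FiniteDimensional F E] (A : Subalgebra F E) {x : E} (hx : x ∈ A) :
    x⁻¹ ∈ A := by
  rcases eq_or_ne x 0 with rfl | hx0
  · simpa using A.zero_mem
  · let f : A →ₗ[F] A := LinearMap.mulLeft F (⟨x, hx⟩ : A)
    have hinj : Function.Injective f := by
      intro a b hab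
      have : (x : E) * a = x * b := congrArg Subtype.val hab
      exact Subtype.ext (mul_left_cancel₀ hx0 this)
    have hsurj : Function.Surjective f :=
      (LinearMap.injective_iff_surjective (f := f)).mp hinj
    obtain ⟨y, hy⟩ := hsurj 1
    have hxy : x * (y : E) = 1 := congrArg Subtype.val hy
    have : x⁻¹ = (y : E) := inv_eq_of_mul_eq_one_right hxy
    rw [this]; exact y.2

end Aux

/-- Let `(E, τ)` be a finite-dimensional `F`-division algebra with involution (with `τ`
fixing `F`) and `L` a subfield of `Sym(E, τ)` containing `F`, maximal for inclusion among
such subfields. Then either `L` is a maximal subfield of `E`, or there exists a nonzero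
skew-symmetric `u` with `u² ∈ L` such that `L(u)` is a maximal subfield of `E`. -/
theorem stmt_15 {F E : Type*} [Field F] [DivisionRing E] [Algebra F E] [StarRing E]
    [FiniteDimensional F E] (h2 : (2 : F) ≠ 0)
    (hstar : ∀ c : F, star (algebraMap F E c) = algebraMap F E c)
    (L : Subalgebra F E)
    (hLsym : ∀ x ∈ L, star x = x)
    (hLmax : ∀ L' : Subalgebra F E, (∀ x ∈ L', star x = x) → L ≤ L' → L' = L) :
    IsMaximalSubfield L ∨
      ∃ u : E, u ≠ 0 ∧ star u = -u ∧ u * u ∈ L ∧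
        IsMaximalSubfield (Algebra.adjoin F (insert u (L : Set E))) := by
  classical
  set half : E := algebraMap F E 2⁻¹ with hhalf
  have hhalf_comm : ∀ x : E, half * x = x * half := fun x => Algebra.commutes _ _
  have hhalf_star : star half = half := hstar _
  have h2half : (algebraMap F E 2) * half = 1 := by
    rw [hhalf, ← map_mul, mul_inv_cancel₀ h2, map_one]
  -- L is commutative
  have hLcomm : ∀ x ∈ L, ∀ y ∈ L, x * y = y * x := by
    intro x hx y hy
    have h := hLsym (x * y) (mul_mem hx hy)
    rw [star_mul, hLsym x hx, hLsym y hy] at h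
    exact h.symm
  set C : Subalgebra F E := Subalgebra.centralizer F (L : Set E) with hC
  have hLC : L ≤ C := by
    intro x hx
    rw [hC, Subalgebra.mem_centralizer_iff]
    intro g hg
    exact hLcomm g hg x hx
  have hCstar : ∀ c ∈ C, star c ∈ C := by
    intro c hc
    rw [hC, Subalgebra.mem_centralizer_iff] at hc ⊢
    intro g hg
    have : star (c * g) = star (g * c) := by rw [hc g hg]
    rwa [star_mul, star_mul, hLsym g hg] at this
  -- symmetric elements of the centralizer lie in L
  have keyC : ∀ c ∈ C, star c = c → c ∈ L := by
    intro c hcC hcs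
    by_contra hcL
    set L' : Subalgebra F E := Algebra.adjoin F (insert c (L : Set E)) with hL'
    have hgen : ∀ a ∈ insert c (L : Set E), ∀ b ∈ insert c (L : Set E), a * b = b * a := by
      intro a ha b hb
      rcases Set.mem_insert_iff.mp ha with ha' | ha' <;>
        rcases Set.mem_insert_iff.mp hb with hb' | hb'
      · rw [ha', hb']
      · rw [ha']; exact ((Subalgebra.mem_centralizer_iff F).mp hcC b hb').symm
      · rw [hb']; exact (Subalgebra.mem_centralizer_iff F).mp hcC a ha'
      · exact hLcomm a ha' b hb'
    have hL'comm : ∀ x ∈ L', ∀ y ∈ L', x * y = y * x := aux_adjoin_comm hgen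
    have hL'sym : ∀ x ∈ L', star x = x := by
      intro x hx
      induction hx using Algebra.adjoin_induction with
      | mem z hz =>
          rcases Set.mem_insert_iff.mp hz with rfl | hz
          · exact hcs
          · exact hLsym z hz
      | algebraMap r => exact hstar r
      | add x y hx hy ihx ihy => rw [star_add, ihx, ihy]
      | mul x y hx hy ihx ihy => rw [star_mul, ihx, ihy, hL'comm y hy x hx]
    have hLL' : L ≤ L' := by
      intro z hz
      exact Algebra.subset_adjoin (Set.mem_insert_of_mem _ hz)
    have := hLmax L' hL'sym hLL'
    exact hcL (this ▸ Algebra.subset_adjoin (Set.mem_insert _ _))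
  -- decomposition: for c ∈ C, the symmetric part lies in L and the rest is skew
  have hdecomp : ∀ c ∈ C, half * (c + star c) ∈ L ∧
      star (c - half * (c + star c)) = -(c - half * (c + star c)) := by
    intro c hcC
    have hsC : half * (c + star c) ∈ C :=
      mul_mem (Subalgebra.algebraMap_mem C _) (add_mem hcC (hCstar c hcC))
    have hss : star (half * (c + star c)) = half * (c + star c) := by
      rw [star_mul, star_add, star_star, hhalf_star, ← hhalf_comm, add_comm]
    have hsL : half * (c + star c) ∈ L := keyC _ hsC hss
    refine ⟨hsL, ?_⟩
    have h2s : half * (c + star c) + half * (c + star c) = c + star c := by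
      have : (algebraMap F E 2) * (half * (c + star c)) = c + star c := by
        rw [← mul_assoc, h2half, one_mul]
      have h2E : (algebraMap F E 2 : E) = 1 + 1 := by
        rw [map_ofNat]; norm_num
      calc half * (c + star c) + half * (c + star c)
          = (1 + 1) * (half * (c + star c)) := by rw [add_mul, one_mul]
        _ = (algebraMap F E 2) * (half * (c + star c)) := by rw [h2E]
        _ = c + star c := this
    set s := half * (c + star c)
    have hcc : star c = s + s - c := by rw [h2s]; abel
    rw [star_sub, hcc, hss]
    abel
  by_cases hCL : C ≤ L
  · left
    refine ⟨hLcomm, fun K' hK'comm hle => ?_⟩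
    refine le_antisymm (fun x hx => ?_) hle
    apply hCL
    rw [hC, Subalgebra.mem_centralizer_iff]
    intro g hg
    exact hK'comm g (hle hg) x hx
  · right
    obtain ⟨c, hcC, hcL⟩ := SetLike.not_le_iff_exists.mp hCL
    obtain ⟨hsL, hskew⟩ := hdecomp c hcC
    set s := half * (c + star c) with hs
    set u := c - s with hu
    have hu0 : u ≠ 0 := by
      intro h
      apply hcL
      have : c = s := by rwa [hu, sub_eq_zero] at h
      rw [this]; exact hsL
    have huC : u ∈ C := sub_mem hcC (hLC hsL)
    have huskew : star u = -u := hskew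
    have hu2 : u * u ∈ L := by
      apply keyC _ (mul_mem huC huC)
      rw [star_mul, huskew, neg_mul_neg]
    set M : Subalgebra F E := Algebra.adjoin F (insert u (L : Set E)) with hM
    have hLM : L ≤ M := fun z hz => Algebra.subset_adjoin (Set.mem_insert_of_mem _ hz)
    have huM : u ∈ M := Algebra.subset_adjoin (Set.mem_insert _ _)
    have hgen : ∀ a ∈ insert u (L : Set E), ∀ b ∈ insert u (L : Set E), a * b = b * a := by
      intro a ha b hb
      rcases Set.mem_insert_iff.mp ha with ha' | ha' <;>
        rcases Set.mem_insert_iff.mp hb with hb' | hb'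
      · rw [ha', hb']
      · rw [ha']; exact ((Subalgebra.mem_centralizer_iff F).mp huC b hb').symm
      · rw [hb']; exact (Subalgebra.mem_centralizer_iff F).mp huC a ha'
      · exact hLcomm a ha' b hb'
    have hMcomm : ∀ x ∈ M, ∀ y ∈ M, x * y = y * x := aux_adjoin_comm hgen
    refine ⟨u, hu0, huskew, hu2, hMcomm, fun K' hK'comm hle => ?_⟩
    refine le_antisymm (fun x hx => ?_) hle
    -- x commutes with L, so x ∈ C
    have hxC : x ∈ C := by
      rw [hC, Subalgebra.mem_centralizer_iff]
      intro g hg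
      exact hK'comm g (hle (hLM hg)) x hx
    have hxu : u * x = x * u := hK'comm u (hle huM) x hx
    obtain ⟨hsxL, hkskew⟩ := hdecomp x hxC
    set sx := half * (x + star x) with hsx
    set k := x - sx with hk
    have hkC : k ∈ C := sub_mem hxC (hLC hsxL)
    have hsxu : sx * u = u * sx := (Subalgebra.mem_centralizer_iff F).mp huC sx hsxL
    have hku : k * u = u * k := by
      rw [hk, sub_mul, ← hxu, hsxu, mul_sub]
    have hkuL : k * u ∈ L := by
      apply keyC _ (mul_mem hkC huC)
      rw [star_mul, huskew, hkskew, neg_mul_neg, ← hku]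
    have huinv : u⁻¹ ∈ M := aux_inv_mem M huM
    have hkM : k ∈ M := by
      have : k = (k * u) * u⁻¹ := by
        rw [mul_assoc, mul_inv_cancel₀ hu0, mul_one]
      rw [this]
      exact mul_mem (hLM hkuL) huinv
    have : x = sx + k := by rw [hk]; abel
    rw [this]
    exact add_mem (hLM hsxL) hkM
end

section
/- Let (A,σ) be an F-algebra with involution and 𝒫 a positive cone on (A,σ). Suppose a hermitian form h over (A,σ) satisfies h ≅ ⟨a_1,…,a_r⟩_σ ⊥ ⟨b_1,…,b_s⟩_σ and h ≅ ⟨a'_1,…,a'_p⟩_σ ⊥ ⟨b'_1,…,b'_q⟩_σ, where all a_i, a'_i are invertible elements of 𝒫 and all b_j, b'_j are invertible elements of -𝒫. Then r = p and s = q. -/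
open Pointwise

open Matrix

/-- A positive cone: a prepositive cone maximal with respect to inclusion. -/
def IsPositiveCone (F : Type*) {A : Type*} [Field F] [Ring A] [Algebra F A] [StarRing A]
    (PC : Set A) : Prop :=
  IsPrepositiveCone F PC ∧
  ∀ QC : Set A, IsPrepositiveCone F QC → PC ⊆ QC → QC = PC


namespace Stmt18Aux

variable {A : Type*} [Ring A] [StarRing A]

lemma list_sum_mem (PC : Set A) (h0 : (0:A) ∈ PC)
    (hadd : ∀ a ∈ PC, ∀ b ∈ PC, a + b ∈ PC) :
    ∀ L : List A, (∀ y ∈ L, y ∈ PC) → L.sum ∈ PC := by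
  intro L hL
  induction L with
  | nil => simpa using h0
  | cons y L ih =>
    rw [List.sum_cons]
    exact hadd y (hL y (by simp)) L.sum (ih fun z hz => hL z (by simp [hz]))

lemma anisotropic [Nontrivial A]
    (hsimple : ∀ I : TwoSidedIdeal A, I = ⊥ ∨ I = ⊤)
    (PC : Set A)
    (hsym : ∀ a ∈ PC, star a = a) (hne : PC.Nonempty)
    (hadd : ∀ a ∈ PC, ∀ b ∈ PC, a + b ∈ PC)
    (hconj : ∀ x : A, ∀ p ∈ PC, star x * p * x ∈ PC)
    (hproper : ∀ a ∈ PC, -a ∈ PC → a = 0)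
    {a : A} (ha : a ∈ PC) (hau : IsUnit a) {x : A}
    (hx : star x * a * x = 0) : x = 0 := by
  obtain ⟨p₀, hp₀⟩ := hne
  have h0 : (0:A) ∈ PC := by simpa using hconj 0 p₀ hp₀
  by_contra hx0
  set m := a * x with hm
  have hm0 : m ≠ 0 := by
    intro h
    rw [hm, hau.mul_right_eq_zero] at h
    exact hx0 h
  -- The two-sided ideal of finite sums ∑ wᵢ * m * vᵢ
  set S : Set A := {y | ∃ l : List (A × A), (l.map fun p => p.1 * m * p.2).sum = y} with hSdef
  have hS0 : (0:A) ∈ S := ⟨[], by simp⟩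
  have hSadd : ∀ {y z : A}, y ∈ S → z ∈ S → y + z ∈ S := by
    rintro y z ⟨l₁, rfl⟩ ⟨l₂, rfl⟩
    exact ⟨l₁ ++ l₂, by simp⟩
  have hSneg : ∀ {y : A}, y ∈ S → -y ∈ S := by
    rintro y ⟨l, rfl⟩
    refine ⟨l.map fun p => (-p.1, p.2), ?_⟩
    induction l with
    | nil => simp
    | cons p l ih =>
      simp only [List.map_cons, List.map_map, List.sum_cons, Function.comp_def] at ih ⊢
      rw [ih]; simp [neg_mul]; abel
  have hSmull : ∀ {u y : A}, y ∈ S → u * y ∈ S := by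
    rintro u y ⟨l, rfl⟩
    refine ⟨l.map fun p => (u * p.1, p.2), ?_⟩
    induction l with
    | nil => simp
    | cons p l ih =>
      simp only [List.map_cons, List.map_map, List.sum_cons, Function.comp_def] at ih ⊢
      rw [ih]; simp [mul_add, mul_assoc]
  have hSmulr : ∀ {y u : A}, y ∈ S → y * u ∈ S := by
    rintro y u ⟨l, rfl⟩
    refine ⟨l.map fun p => (p.1, p.2 * u), ?_⟩
    induction l with
    | nil => simp
    | cons p l ih =>
      simp only [List.map_cons, List.map_map, List.sum_cons, Function.comp_def] at ih ⊢
      rw [ih]; simp [add_mul, mul_assoc]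
  set J : TwoSidedIdeal A := TwoSidedIdeal.mk' S hS0 hSadd hSneg hSmull hSmulr with hJ
  have hmJ : m ∈ J := by
    rw [hJ, TwoSidedIdeal.mem_mk']
    exact ⟨[(1, 1)], by simp⟩
  have hJtop : J = ⊤ := by
    rcases hsimple J with h | h
    · rw [h, TwoSidedIdeal.mem_bot] at hmJ
      exact absurd hmJ hm0
    · exact h
  have h1J : (1:A) ∈ J := by rw [hJtop]; exact TwoSidedIdeal.mem_top A
  rw [hJ, TwoSidedIdeal.mem_mk'] at h1J
  obtain ⟨l, hl⟩ := h1J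
  have hx' : ∀ z : A, star x * (a * (x * z)) = 0 := by
    intro z
    have e : (star x * a * x) * z = star x * (a * (x * z)) := by
      rw [mul_assoc, mul_assoc]
    rw [← e, hx, zero_mul]
  have hsm : star m = star x * a := by rw [hm, StarMul.star_mul, hsym a ha]
  have expand : ∀ w v t : A,
      star (star w + x * (v * t)) * a * (star w + x * (v * t))
        = w * a * star w + ((w * m * v) * t + star t * star (w * m * v)) := by
    intro w v t
    have e1 : star (star w + x * (v * t)) = w + star t * star v * star x := by
      rw [StarAddMonoid.star_add, star_star, StarMul.star_mul, StarMul.star_mul]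
    have e2 : w * a * (x * (v * t)) = (w * m * v) * t := by rw [hm]; noncomm_ring
    have e3 : star t * star v * star x * a * star w = star t * star (w * m * v) := by
      rw [StarMul.star_mul, StarMul.star_mul, hsm]; noncomm_ring
    have e4 : star t * star v * star x * a * (x * (v * t))
        = star t * star v * (star x * (a * (x * (v * t)))) := by noncomm_ring
    rw [e1]
    calc (w + star t * star v * star x) * a * (star w + x * (v * t))
        = w * a * star w + w * a * (x * (v * t)) + star t * star v * star x * a * star w
          + star t * star v * star x * a * (x * (v * t)) := by noncomm_ring
      _ = w * a * star w + ((w * m * v) * t + star t * star (w * m * v)) := by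
          rw [e2, e3, e4, hx' (v * t)]
          simp only [mul_zero, add_zero]
          abel
  have sum_expand : ∀ (L : List (A × A)) (t : A),
      (L.map fun p => star (star p.1 + x * (p.2 * t)) * a * (star p.1 + x * (p.2 * t))).sum
        = (L.map fun p => p.1 * a * star p.1).sum
          + (((L.map fun p => p.1 * m * p.2).sum) * t
             + star t * star ((L.map fun p => p.1 * m * p.2).sum)) := by
    intro L t
    induction L with
    | nil => simp
    | cons p L ih =>
      rw [List.map_cons, List.sum_cons, ih, List.map_cons, List.sum_cons, List.map_cons,
        List.sum_cons, expand p.1 p.2 t, add_mul, StarAddMonoid.star_add, mul_add]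
      abel
  have star_sum : ∀ L : List (A × A),
      star ((L.map fun p => p.1 * a * star p.1).sum) = (L.map fun p => p.1 * a * star p.1).sum := by
    intro L
    induction L with
    | nil => simp
    | cons p L ih =>
      simp only [List.map_cons, List.sum_cons, StarAddMonoid.star_add]
      rw [ih]
      congr 1
      rw [StarMul.star_mul, StarMul.star_mul, star_star, hsym a ha]
      noncomm_ring
  set W : A := (l.map fun p => p.1 * a * star p.1).sum with hW
  have hkey : ∀ t : A, W + (t + star t) ∈ PC := by
    intro t
    have hmem := list_sum_mem PC h0 hadd
      (l.map fun p => star (star p.1 + x * (p.2 * t)) * a * (star p.1 + x * (p.2 * t)))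
      (by
        intro y hy
        obtain ⟨p, -, rfl⟩ := List.mem_map.mp hy
        exact hconj _ a ha)
    rwa [sum_expand l t, hl, one_mul, _root_.star_one, mul_one, ← hW] at hmem
  have hWsym : star W = W := star_sum l
  have hWPC : W ∈ PC := by simpa using hkey 0
  have final : ∀ b ∈ PC, star b = b → W + b = 0 := by
    intro b hb hbsym
    have hX : W + b ∈ PC := hadd W hWPC b hb
    have hXsym : star (W + b) = W + b := by rw [StarAddMonoid.star_add, hWsym, hbsym]
    have hkey2 : (W + b) + (-(W + b) + -(W + b)) ∈ PC := by
      have hmem := hadd _ (hkey (-(W + b))) b hb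
      have e : (W + (-(W + b) + star (-(W + b)))) + b = (W + b) + (-(W + b) + -(W + b)) := by
        rw [_root_.star_neg, hXsym]; abel
      rwa [e] at hmem
    have hneg : -(W + b) ∈ PC := by
      have e : (W + b) + (-(W + b) + -(W + b)) = -(W + b) := by abel
      rwa [e] at hkey2
    exact hproper _ hX hneg
  have h1 : W + a = 0 := final a ha (hsym a ha)
  have h2 : W + (a + a) = 0 := final (a + a) (hadd a ha a ha) (by rw [StarAddMonoid.star_add, hsym a ha])
  have ha0 : a = 0 := by
    have e : a = (W + (a + a)) - (W + a) := by abel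
    rw [e, h1, h2, sub_zero]
  exact hau.ne_zero ha0

lemma finset_sum_mem (PC : Set A) (h0 : (0:A) ∈ PC)
    (hadd : ∀ a ∈ PC, ∀ b ∈ PC, a + b ∈ PC) {ι : Type*} (s : Finset ι) (f : ι → A)
    (hf : ∀ i ∈ s, f i ∈ PC) : (∑ i ∈ s, f i) ∈ PC :=
  Finset.sum_induction f (· ∈ PC) (fun a b ha hb => hadd a ha b hb) h0 hf

lemma eq_zero_of_sum_eq_zero (PC : Set A) (h0 : (0:A) ∈ PC)
    (hadd : ∀ a ∈ PC, ∀ b ∈ PC, a + b ∈ PC)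
    (hproper : ∀ a ∈ PC, -a ∈ PC → a = 0)
    {ι : Type*} [DecidableEq ι] (s : Finset ι) (f : ι → A)
    (hf : ∀ i ∈ s, f i ∈ PC) (hsum : ∑ i ∈ s, f i = 0) : ∀ i ∈ s, f i = 0 := by
  intro i hi
  refine hproper _ (hf i hi) ?_
  have e : f i + ∑ j ∈ s.erase i, f j = 0 := by rw [Finset.add_sum_erase s f hi, hsum]
  have hmem := finset_sum_mem PC h0 hadd (s.erase i) f
    (fun j hj => hf j (Finset.mem_of_mem_erase hj))
  rw [neg_eq_of_add_eq_zero_right e]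
  exact hmem

lemma core {F A : Type*} [Field F] [Ring A] [Algebra F A] [StarRing A]
    [FiniteDimensional F A] [Nontrivial A]
    (hsimple : ∀ I : TwoSidedIdeal A, I = ⊥ ∨ I = ⊤)
    (PC : Set A) (hPC : IsPrepositiveCone F PC)
    {k : ℕ} (c d : Fin k → A)
    (hc : ∀ i, IsUnit (c i) ∧ (c i ∈ PC ∨ -c i ∈ PC))
    (hd : ∀ i, IsUnit (d i) ∧ (d i ∈ PC ∨ -d i ∈ PC))
    (U : Matrix (Fin k) (Fin k) A)
    (hcong : Uᴴ * Matrix.diagonal c * U = Matrix.diagonal d) :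
    Nat.card {i : Fin k // c i ∈ PC} + Nat.card {i : Fin k // ¬ d i ∈ PC} ≤ k := by
  classical
  obtain ⟨hsym, hne, hadd, hconj, -, hproper⟩ := hPC
  obtain ⟨p₀, hp₀⟩ := hne
  have h0 : (0:A) ∈ PC := by simpa using hconj 0 p₀ hp₀
  have transform : ∀ w : Fin k → A,
      ∑ i, star ((U *ᵥ w) i) * c i * (U *ᵥ w) i = ∑ i, star (w i) * d i * w i := by
    intro w
    have h1 : star (U *ᵥ w) ⬝ᵥ (Matrix.diagonal c *ᵥ (U *ᵥ w))
        = star w ⬝ᵥ (Matrix.diagonal d *ᵥ w) := by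
      rw [Matrix.mulVec_mulVec, Matrix.dotProduct_mulVec, Matrix.star_mulVec,
        Matrix.vecMul_vecMul, ← Matrix.mul_assoc, hcong, ← Matrix.dotProduct_mulVec]
    have e1 : star (U *ᵥ w) ⬝ᵥ (Matrix.diagonal c *ᵥ (U *ᵥ w))
        = ∑ i, star ((U *ᵥ w) i) * c i * (U *ᵥ w) i := by
      simp [dotProduct, Matrix.mulVec_diagonal, mul_assoc]
    have e2 : star w ⬝ᵥ (Matrix.diagonal d *ᵥ w) = ∑ i, star (w i) * d i * w i := by
      simp [dotProduct, Matrix.mulVec_diagonal, mul_assoc]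
    rw [← e1, ← e2, h1]
  let e₁ : ({i : Fin k // c i ∈ PC} → A) → (Fin k → A) := fun y i =>
    if h : c i ∈ PC then y ⟨i, h⟩ else 0
  let e₂ : ({i : Fin k // ¬ d i ∈ PC} → A) → (Fin k → A) := fun z i =>
    if h : d i ∈ PC then 0 else z ⟨i, h⟩
  let Φ : (({i : Fin k // c i ∈ PC} → A) × ({i : Fin k // ¬ d i ∈ PC} → A)) →ₗ[F] (Fin k → A) :=
    { toFun := fun yz => e₁ yz.1 + U *ᵥ (e₂ yz.2)
      map_add' := by
        intro p q
        have he1 : e₁ (p.1 + q.1) = e₁ p.1 + e₁ q.1 := by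
          funext i; by_cases h : c i ∈ PC <;> simp [e₁, h]
        have he2 : e₂ (p.2 + q.2) = e₂ p.2 + e₂ q.2 := by
          funext i; by_cases h : d i ∈ PC <;> simp [e₂, h]
        show e₁ (p.1 + q.1) + U *ᵥ e₂ (p.2 + q.2) = _
        rw [he1, he2, Matrix.mulVec_add]
        abel
      map_smul' := by
        intro r p
        have he1 : e₁ (r • p.1) = r • e₁ p.1 := by
          funext i; by_cases h : c i ∈ PC <;> simp [e₁, h]
        have he2 : e₂ (r • p.2) = r • e₂ p.2 := by
          funext i; by_cases h : d i ∈ PC <;> simp [e₂, h]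
        show e₁ (r • p.1) + U *ᵥ e₂ (r • p.2) = r • (e₁ p.1 + U *ᵥ e₂ p.2)
        rw [he1, he2, Matrix.mulVec_smul, smul_add] }
  have hinj : Function.Injective Φ := by
    rw [injective_iff_map_eq_zero]
    rintro ⟨y, z⟩ hyz
    have hyz' : e₁ y + U *ᵥ e₂ z = 0 := hyz
    have hneg : e₁ y = -(U *ᵥ e₂ z) := by rwa [add_eq_zero_iff_eq_neg] at hyz'
    have hq1 : ∑ i, star (e₁ y i) * c i * e₁ y i = ∑ i, star (e₂ z i) * d i * e₂ z i := by
      rw [← transform (e₂ z), hneg]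
      simp
    have hbase : ∀ i ∈ Finset.univ, star (e₁ y i) * c i * e₁ y i ∈ PC := by
      intro i _
      by_cases h : c i ∈ PC
      · exact hconj _ _ h
      · have hz : e₁ y i = 0 := by simp [e₁, h]
        rw [hz]
        simpa using h0
    have hbase2 : ∀ i ∈ Finset.univ, star (e₂ z i) * (-(d i)) * e₂ z i ∈ PC := by
      intro i _
      by_cases h : d i ∈ PC
      · have hz : e₂ z i = 0 := by simp [e₂, h]
        rw [hz]
        simpa using h0
      · exact hconj _ _ ((hd i).2.resolve_left h)
    set q := ∑ i, star (e₂ z i) * d i * e₂ z i with hqdef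
    have hqPC : q ∈ PC := by
      rw [← hq1]
      exact finset_sum_mem PC h0 hadd _ _ hbase
    have hqe : -q = ∑ i, star (e₂ z i) * (-(d i)) * e₂ z i := by
      rw [hqdef, ← Finset.sum_neg_distrib]
      congr 1
      funext i
      simp
    have hqnegPC : -q ∈ PC := by
      rw [hqe]
      exact finset_sum_mem PC h0 hadd _ _ hbase2
    have hq0 : q = 0 := hproper q hqPC hqnegPC
    have hy : y = 0 := by
      funext j
      have hterm := eq_zero_of_sum_eq_zero PC h0 hadd hproper Finset.univ _ hbase
        (hq1.trans hq0) j.1 (Finset.mem_univ _)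
      have he : e₁ y j.1 = y j := by
        simp only [e₁, dif_pos j.2]
      rw [he] at hterm
      exact anisotropic hsimple PC hsym ⟨p₀, hp₀⟩ hadd hconj hproper j.2 (hc j.1).1 hterm
    have hz : z = 0 := by
      funext j
      have hsum0 : ∑ i, star (e₂ z i) * (-(d i)) * e₂ z i = 0 := by
        rw [← hqe, hq0, neg_zero]
      have hterm := eq_zero_of_sum_eq_zero PC h0 hadd hproper Finset.univ _ hbase2
        hsum0 j.1 (Finset.mem_univ _)
      have he : e₂ z j.1 = z j := by
        simp only [e₂, dif_neg j.2]
      rw [he] at hterm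
      exact anisotropic hsimple PC hsym ⟨p₀, hp₀⟩ hadd hconj hproper
        ((hd j.1).2.resolve_left j.2) ((hd j.1).1.neg) hterm
    show (y, z) = 0
    rw [hy, hz]
    rfl
  have hfr := LinearMap.finrank_le_finrank_of_injective hinj
  rw [Module.finrank_prod, Module.finrank_pi_fintype, Module.finrank_pi_fintype,
    Module.finrank_pi_fintype] at hfr
  simp only [Finset.sum_const, Finset.card_univ, smul_eq_mul, Fintype.card_fin] at hfr
  have hn : 0 < Module.finrank F A := Module.finrank_pos
  have hle : Fintype.card {i : Fin k // c i ∈ PC} + Fintype.card {i : Fin k // ¬ d i ∈ PC} ≤ k := by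
    refine Nat.le_of_mul_le_mul_right ?_ hn
    rwa [add_mul]
  rw [Nat.card_eq_fintype_card, Nat.card_eq_fintype_card]
  exact hle


end Stmt18Aux

/-- Sylvester inertia with respect to a positive cone: if two diagonal hermitian forms
`⟨c₁,…,c_k⟩_σ` and `⟨d₁,…,d_k⟩_σ`, all of whose coefficients are invertible elements of
`PC ∪ -PC`, are isometric (i.e. their Gram matrices are congruent via
`U ↦ σ(U)ᵗ ⬝ U` for an invertible matrix `U`), then the numbers of coefficients in `PC`
agree, as do the numbers of coefficients in `-PC`. -/
theorem stmt_18 {F A : Type*} [Field F] [Ring A] [Algebra F A] [StarRing A]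
    [FiniteDimensional F A] [Nontrivial A] (h2 : (2 : F) ≠ 0)
    (hsimple : ∀ I : TwoSidedIdeal A, I = ⊥ ∨ I = ⊤)
    (hstar : ∀ c : F, star (algebraMap F A c) = algebraMap F A c)
    (hF : ∀ a : A, (∀ b : A, a * b = b * a) → star a = a → ∃ c : F, algebraMap F A c = a)
    (PC : Set A) (hpos : IsPositiveCone F PC)
    (k : ℕ) (c d : Fin k → A)
    (hc : ∀ i, IsUnit (c i) ∧ (c i ∈ PC ∨ -c i ∈ PC))
    (hd : ∀ i, IsUnit (d i) ∧ (d i ∈ PC ∨ -d i ∈ PC))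
    (U : Matrix (Fin k) (Fin k) A) (hU : IsUnit U)
    (hcong : Uᴴ * Matrix.diagonal c * U = Matrix.diagonal d) :
    Nat.card {i : Fin k // c i ∈ PC} = Nat.card {i : Fin k // d i ∈ PC} ∧
    Nat.card {i : Fin k // -c i ∈ PC} = Nat.card {i : Fin k // -d i ∈ PC} := by
  classical
  obtain ⟨hPC, -⟩ := hpos
  have hproper : ∀ a ∈ PC, -a ∈ PC → a = 0 := hPC.2.2.2.2.2
  have hexcl : ∀ (e : A), IsUnit e → (e ∈ PC ∨ -e ∈ PC) → (¬ e ∈ PC ↔ -e ∈ PC) := by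
    intro e he hdisj
    constructor
    · intro h; exact hdisj.resolve_left h
    · intro hn hp
      exact he.ne_zero (hproper e hp hn)
  set V : Matrix (Fin k) (Fin k) A := Units.val hU.unit⁻¹
  have hUV : U * V = 1 := hU.mul_val_inv
  have hVU' : Vᴴ * Uᴴ = 1 := by
    rw [← Matrix.conjTranspose_mul, hUV, Matrix.conjTranspose_one]
  have hcong2 : Vᴴ * Matrix.diagonal d * V = Matrix.diagonal c := by
    rw [← hcong]
    calc Vᴴ * (Uᴴ * Matrix.diagonal c * U) * V
        = Vᴴ * Uᴴ * Matrix.diagonal c * (U * V) := by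
          simp only [Matrix.mul_assoc]
      _ = Matrix.diagonal c := by rw [hVU', hUV, Matrix.one_mul, Matrix.mul_one]
  have h1 := Stmt18Aux.core hsimple PC hPC c d hc hd U hcong
  have h2 := Stmt18Aux.core hsimple PC hPC d c hd hc V hcong2
  have hcc : Nat.card {i : Fin k // ¬ c i ∈ PC} = k - Nat.card {i : Fin k // c i ∈ PC} := by
    rw [Nat.card_eq_fintype_card, Nat.card_eq_fintype_card, Fintype.card_subtype_compl,
      Fintype.card_fin]
  have hdd : Nat.card {i : Fin k // ¬ d i ∈ PC} = k - Nat.card {i : Fin k // d i ∈ PC} := by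
    rw [Nat.card_eq_fintype_card, Nat.card_eq_fintype_card, Fintype.card_subtype_compl,
      Fintype.card_fin]
  have hcle : Nat.card {i : Fin k // c i ∈ PC} ≤ k := by
    rw [Nat.card_eq_fintype_card]
    simpa using Fintype.card_subtype_le (fun i : Fin k => c i ∈ PC)
  have hdle : Nat.card {i : Fin k // d i ∈ PC} ≤ k := by
    rw [Nat.card_eq_fintype_card]
    simpa using Fintype.card_subtype_le (fun i : Fin k => d i ∈ PC)
  have hmain : Nat.card {i : Fin k // c i ∈ PC} = Nat.card {i : Fin k // d i ∈ PC} := by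
    rw [hdd] at h1
    rw [hcc] at h2
    omega
  refine ⟨hmain, ?_⟩
  have ec : Nat.card {i : Fin k // -c i ∈ PC} = Nat.card {i : Fin k // ¬ c i ∈ PC} :=
    Nat.card_congr (Equiv.subtypeEquivRight fun i => (hexcl (c i) (hc i).1 (hc i).2).symm)
  have ed : Nat.card {i : Fin k // -d i ∈ PC} = Nat.card {i : Fin k // ¬ d i ∈ PC} :=
    Nat.card_congr (Equiv.subtypeEquivRight fun i => (hexcl (d i) (hd i).1 (hd i).2).symm)
  rw [ec, ed, hcc, hdd, hmain]
end

section
/- Let F be a field of characteristic ≠ 2 and P an ordering of F. Suppose 𝒫 ⊆ Sym(A,σ) satisfies: 𝒫 ≠ ∅, 𝒫 + 𝒫 ⊆ 𝒫, σ(x)𝒫x ⊆ 𝒫 for all x ∈ A, and {u ∈ F | u𝒫 ⊆ 𝒫} is an ordering of F, but 𝒫 ∩ -𝒫 ≠ {0}. Then 𝒫 = Sym(A,σ). -/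
open Pointwise

/-- Let `(A, σ)` be an `F`-algebra with involution (finite-dimensional, simple, with
`F = Z(A) ∩ Sym(A,σ)` and `char F ≠ 2`). If `PC ⊆ Sym(A,σ)` is nonempty, closed under
addition and under `p ↦ σ(x) p x`, has `{u ∈ F | u PC ⊆ PC}` an ordering of `F`, but is
not proper (`PC ∩ -PC ≠ {0}`), then `PC = Sym(A,σ)`. -/
theorem stmt_19 {F A : Type*} [Field F] [Ring A] [Algebra F A] [StarRing A]
    [FiniteDimensional F A] [Nontrivial A] (h2 : (2 : F) ≠ 0)
    (hsimple : ∀ I : TwoSidedIdeal A, I = ⊥ ∨ I = ⊤)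
    (hstar : ∀ c : F, star (algebraMap F A c) = algebraMap F A c)
    (hF : ∀ a : A, (∀ b : A, a * b = b * a) → star a = a → ∃ c : F, algebraMap F A c = a)
    (PC : Set A)
    (hsym : ∀ a ∈ PC, star a = a)
    (hne : PC.Nonempty)
    (hadd : ∀ a ∈ PC, ∀ b ∈ PC, a + b ∈ PC)
    (hconj : ∀ x : A, ∀ p ∈ PC, star x * p * x ∈ PC)
    (hord : IsOrdering {u : F | ∀ p ∈ PC, u • p ∈ PC})
    (himproper : {a | a ∈ PC ∧ -a ∈ PC} ≠ {0}) :
    PC = {a : A | star a = a} := by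
  obtain ⟨p0, hp0⟩ := hne
  have hzero : (0 : A) ∈ PC := by
    have := hconj 0 p0 hp0
    simpa using this
  -- get a nonzero element a with a ∈ PC and -a ∈ PC
  obtain ⟨a, ⟨haP, haN⟩, ha0⟩ : ∃ a, (a ∈ PC ∧ -a ∈ PC) ∧ a ≠ 0 := by
    by_contra h
    push_neg at h
    apply himproper
    ext x
    simp only [Set.mem_setOf_eq, Set.mem_singleton_iff]
    constructor
    · intro hx; exact h x hx
    · rintro rfl; exact ⟨hzero, by simpa using hzero⟩
  have hsa : star a = a := hsym a haP
  -- the subgroup generated by conjugates of a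
  set G : AddSubgroup A := AddSubgroup.closure {z | ∃ x, z = star x * a * x} with hG
  have hGsub : ∀ g ∈ G, g ∈ PC ∧ -g ∈ PC := by
    intro g hg
    refine AddSubgroup.closure_induction ?_ ?_ ?_ ?_ hg
    · rintro z ⟨x, rfl⟩
      refine ⟨hconj x a haP, ?_⟩
      have : star x * (-a) * x ∈ PC := hconj x (-a) haN
      simpa [neg_mul, mul_neg] using this
    · exact ⟨hzero, by simpa using hzero⟩
    · rintro x y _ _ ⟨hx1, hx2⟩ ⟨hy1, hy2⟩
      exact ⟨hadd _ hx1 _ hy1, by rw [neg_add]; exact hadd _ hx2 _ hy2⟩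
    · rintro x _ ⟨hx1, hx2⟩
      exact ⟨hx2, by simpa using hx1⟩
  -- cross terms lie in G
  have hcross : ∀ u v : A, star u * a * v + star v * a * u ∈ G := by
    intro u v
    have h1 : star (u + v) * a * (u + v) ∈ G :=
      AddSubgroup.subset_closure ⟨u + v, rfl⟩
    have h2 : star u * a * u ∈ G := AddSubgroup.subset_closure ⟨u, rfl⟩
    have h3 : star v * a * v ∈ G := AddSubgroup.subset_closure ⟨v, rfl⟩
    have key : star u * a * v + star v * a * u =
        star (u + v) * a * (u + v) - star u * a * u - star v * a * v := by
      simp [star_add, add_mul, mul_add]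
      abel
    rw [key]
    exact AddSubgroup.sub_mem G (AddSubgroup.sub_mem G h1 h2) h3
  -- the two-sided ideal generated by a is everything
  set M : AddSubgroup A := AddSubgroup.closure {z | ∃ x y, z = x * a * y} with hM
  have hml : ∀ m ∈ M, ∀ x : A, x * m ∈ M := by
    intro m hm
    refine AddSubgroup.closure_induction ?_ ?_ ?_ ?_ hm
    · rintro z ⟨u, v, rfl⟩ x
      exact AddSubgroup.subset_closure ⟨x * u, v, by simp [mul_assoc]⟩
    · intro x; simpa using AddSubgroup.zero_mem M
    · intro u v _ _ hu hv x
      simpa [mul_add] using AddSubgroup.add_mem M (hu x) (hv x)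
    · intro u _ hu x
      simpa [mul_neg] using AddSubgroup.neg_mem M (hu x)
  have hmr : ∀ m ∈ M, ∀ x : A, m * x ∈ M := by
    intro m hm
    refine AddSubgroup.closure_induction ?_ ?_ ?_ ?_ hm
    · rintro z ⟨u, v, rfl⟩ x
      exact AddSubgroup.subset_closure ⟨u, v * x, by simp [mul_assoc]⟩
    · intro x; simpa using AddSubgroup.zero_mem M
    · intro u v _ _ hu hv x
      simpa [add_mul] using AddSubgroup.add_mem M (hu x) (hv x)
    · intro u _ hu x
      simpa [neg_mul] using AddSubgroup.neg_mem M (hu x)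
  set I : TwoSidedIdeal A := TwoSidedIdeal.mk' (M : Set A)
    (AddSubgroup.zero_mem M)
    (fun hx hy => AddSubgroup.add_mem M hx hy)
    (fun hx => AddSubgroup.neg_mem M hx)
    (fun {x y} hy => hml y hy x)
    (fun {x y} hx => hmr x hx y) with hI
  have haI : a ∈ I := by
    rw [hI, TwoSidedIdeal.mem_mk']
    exact AddSubgroup.subset_closure ⟨1, 1, by simp⟩
  have hItop : I = ⊤ := by
    rcases hsimple I with hbot | htop
    · exfalso; apply ha0
      rw [hbot] at haI
      simpa using haI
    · exact htop
  have hMall : ∀ s : A, s ∈ M := by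
    intro s
    have : s ∈ I := by rw [hItop]; trivial
    rwa [hI, TwoSidedIdeal.mem_mk'] at this
  -- for every m ∈ M, m + star m ∈ G
  have hkey : ∀ m ∈ M, m + star m ∈ G := by
    intro m hm
    refine AddSubgroup.closure_induction ?_ ?_ ?_ ?_ hm
    · rintro z ⟨x, y, rfl⟩
      have : star (x * a * y) = star y * a * star x := by
        simp [star_mul, hsa, mul_assoc]
      rw [this]
      have := hcross (star x) y
      simpa using this
    · simpa using AddSubgroup.zero_mem G
    · intro u v _ _ hu hv
      have : u + v + star (u + v) = (u + star u) + (v + star v) := by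
        rw [star_add]; abel
      rw [this]
      exact AddSubgroup.add_mem G hu hv
    · intro u _ hu
      have : -u + star (-u) = -(u + star u) := by rw [star_neg]; abel
      rw [this]
      exact AddSubgroup.neg_mem G hu
  -- half is in the ordering
  have h1O : (1 : F) ∈ {u : F | ∀ p ∈ PC, u • p ∈ PC} := by
    intro p hp; simpa using hp
  have h2O : (2 : F) ∈ {u : F | ∀ p ∈ PC, u • p ∈ PC} := by
    intro p hp
    have : (2 : F) • p = p + p := by
      rw [two_smul]
    rw [this]; exact hadd p hp p hp
  have hhalf : (2 : F)⁻¹ ∈ {u : F | ∀ p ∈ PC, u • p ∈ PC} := by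
    rcases hord.2.2.1 (2 : F)⁻¹ with h | h
    · exact h
    · exfalso
      have hm1 : (-1 : F) ∈ {u : F | ∀ p ∈ PC, u • p ∈ PC} := by
        have := hord.2.1 _ h _ h2O
        simpa [inv_mul_cancel₀ h2] using this
      have := hord.2.2.2 _ h1O (by simpa using hm1)
      exact one_ne_zero this
  -- conclude
  ext s
  simp only [Set.mem_setOf_eq]
  constructor
  · exact hsym s
  · intro hs
    have hsM : s ∈ M := hMall s
    have : s + star s ∈ G := hkey s hsM
    rw [hs] at this
    have hss : s + s ∈ PC := (hGsub _ this).1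
    have := hhalf _ hss
    have heq : (2 : F)⁻¹ • (s + s) = s := by
      rw [smul_add, ← add_smul]
      have : (2 : F)⁻¹ + (2 : F)⁻¹ = 1 := by
        field_simp
        norm_num
      rw [this, one_smul]
    rwa [heq] at this
end
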